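/- arXiv:math/0607756 — 5 statements merged into one kernel-verified Lean document; each statement's English description precedes it below -/
import Mathlib

section
/- Let 1 ≤ k ≤ n and let ω be a nonnegative, decomposable, normalized element of Λᵏ(ℝⁿ). Then there exist a nonzero, nonnegative, decomposable element η of Λᵏ⁻¹(ℝⁿ) and a vector v ∈ ℝⁿ such that v ∧ η = ω. -/
open ExteriorAlgebra

noncomputable section

/-- The basis `k`-vector `e_A`, the wedge of the standard basis vectors indexed by `A`
in increasing order. -/
def eWedge (n : ℕ) (A : Finset (Fin n)) : ExteriorAlgebra ℝ (Fin n → ℝ) :=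
  ((A.sort (· ≤ ·)).map fun i => ι ℝ (Pi.single i (1 : ℝ))).prod

/-- `ω ∈ Λᵏ(ℝⁿ)` has coordinates `c` with respect to the basis `{e_A}`. -/
def HasCoords {n k : ℕ} (ω : ⋀[ℝ]^k (Fin n → ℝ))
    (c : {A : Finset (Fin n) // A.card = k} → ℝ) : Prop :=
  (ω : ExteriorAlgebra ℝ (Fin n → ℝ)) =
    ∑ A : {A : Finset (Fin n) // A.card = k}, c A • eWedge n A.1

/-- `ω` is nonnegative: all its coordinates are nonnegative. -/
def IsNonneg {n k : ℕ} (ω : ⋀[ℝ]^k (Fin n → ℝ)) : Prop :=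
  ∃ c, HasCoords ω c ∧ ∀ A, 0 ≤ c A

/-- `ω` is positive: all its coordinates are positive. -/
def IsPositive {n k : ℕ} (ω : ⋀[ℝ]^k (Fin n → ℝ)) : Prop :=
  ∃ c, HasCoords ω c ∧ ∀ A, 0 < c A

/-- `ω` is normalized: its coordinates sum to `1`. -/
def IsNormalized {n k : ℕ} (ω : ⋀[ℝ]^k (Fin n → ℝ)) : Prop :=
  ∃ c, HasCoords ω c ∧ ∑ A, c A = 1

/-- `ω` is decomposable: it is a wedge of `k` vectors of `ℝⁿ`. -/
def IsDecomposable {n k : ℕ} (ω : ⋀[ℝ]^k (Fin n → ℝ)) : Prop :=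
  ∃ v : Fin k → (Fin n → ℝ), (ω : ExteriorAlgebra ℝ (Fin n → ℝ)) = ιMulti ℝ k v

namespace NCH

variable {n : ℕ}

/-- The "take the rows indexed by `B` and compute the determinant" alternating map. -/
def detMap {k : ℕ} (B : Finset (Fin n)) (h : B.card = k) :
    (Fin n → ℝ) [⋀^Fin k]→ₗ[ℝ] ℝ :=
  (Matrix.detRowAlternating).compLinearMap (LinearMap.funLeft ℝ ℝ (B.orderEmbOfFin h))

lemma detMap_apply {k : ℕ} (B : Finset (Fin n)) (h : B.card = k) (v : Fin k → (Fin n → ℝ)) :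
    detMap B h v = Matrix.det (Matrix.of fun j r => v j (B.orderEmbOfFin h r)) := rfl

/-- Family of alternating maps extracting the `B`-coordinate. -/
def coordFam (B : Finset (Fin n)) : ∀ i, (Fin n → ℝ) [⋀^Fin i]→ₗ[ℝ] ℝ :=
  fun i => if h : B.card = i then detMap B h else 0

/-- The linear functional on the exterior algebra extracting the coefficient of `e_B`. -/
def coordH (B : Finset (Fin n)) : ExteriorAlgebra ℝ (Fin n → ℝ) →ₗ[ℝ] ℝ :=
  liftAlternating (coordFam B)

lemma coordH_ιMulti {k : ℕ} (B : Finset (Fin n)) (v : Fin k → (Fin n → ℝ)) :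
    coordH B (ιMulti ℝ k v) = if h : B.card = k then detMap B h v else 0 := by
  rw [coordH, liftAlternating_apply_ιMulti]
  by_cases h : B.card = k
  · simp [coordFam, h]
  · simp [coordFam, h]

lemma det_single {k : ℕ} (B : Finset (Fin n)) (h : B.card = k) (m : Fin k → Fin n)
    (hm : StrictMono m) :
    detMap B h (fun j => Pi.single (m j) (1 : ℝ)) =
      if B = Finset.image m Finset.univ then 1 else 0 := by
  rw [detMap_apply]
  split_ifs with hB
  · have hmem : ∀ x, m x ∈ B := fun x => by
      rw [hB]; exact Finset.mem_image_of_mem m (Finset.mem_univ x)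
    have hme : m = B.orderEmbOfFin h := Finset.orderEmbOfFin_unique h hmem hm
    have h1 : (Matrix.of fun j r => (Pi.single (m j) (1 : ℝ) : Fin n → ℝ) (B.orderEmbOfFin h r)) = (1 : Matrix (Fin k) (Fin k) ℝ) := by
      ext j r
      rw [Matrix.of_apply, ← hme, Pi.single_apply, Matrix.one_apply]
      simp [hm.injective.eq_iff, eq_comm]
    rw [h1, Matrix.det_one]
  · obtain ⟨b, hbB, hbm⟩ : ∃ b ∈ B, b ∉ Finset.image m Finset.univ := by
      by_contra hc
      push_neg at hc
      refine hB (Finset.eq_of_subset_of_card_le (fun b hb => hc b hb) ?_)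
      rw [Finset.card_image_of_injective _ hm.injective, Finset.card_univ, Fintype.card_fin, h]
    obtain ⟨r₀, hr₀⟩ : ∃ r₀, B.orderEmbOfFin h r₀ = b := by
      have := Finset.range_orderEmbOfFin B h
      have hb' : b ∈ (B : Set (Fin n)) := hbB
      rw [← this] at hb'
      exact hb'
    apply Matrix.det_eq_zero_of_column_eq_zero r₀
    intro i
    rw [Matrix.of_apply, hr₀, Pi.single_apply, if_neg]
    intro hcon
    exact hbm (hcon ▸ Finset.mem_image_of_mem m (Finset.mem_univ i))

lemma eWedge_eq {k : ℕ} (A : Finset (Fin n)) (h : A.card = k) :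
    eWedge n A = ιMulti ℝ k (fun j => Pi.single (A.orderEmbOfFin h j) (1 : ℝ)) := by
  rw [ιMulti_apply, eWedge]
  congr 1
  apply List.ext_getElem
  · simp [Finset.length_sort, h]
  · intro i h1 h2
    simp [List.getElem_map, List.getElem_ofFn, Finset.orderEmbOfFin_apply]

lemma coordH_eWedge (B A : Finset (Fin n)) :
    coordH B (eWedge n A) = if A = B then 1 else 0 := by
  rw [eWedge_eq A rfl, coordH_ιMulti]
  by_cases h : B.card = A.card
  · rw [dif_pos h, det_single B h _ (A.orderEmbOfFin rfl).strictMono]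
    have himg : Finset.image (⇑(A.orderEmbOfFin rfl)) Finset.univ = A := by
      apply Finset.coe_injective
      rw [Finset.coe_image, Finset.coe_univ, Set.image_univ, Finset.range_orderEmbOfFin]
    rw [himg]
    exact if_congr eq_comm rfl rfl
  · rw [dif_neg h, if_neg fun hAB => h (by rw [hAB])]


lemma altmap_sum_apply {k : ℕ} {α : Type*} (s : Finset α)
    (f : α → (Fin n → ℝ) [⋀^Fin k]→ₗ[ℝ] ExteriorAlgebra ℝ (Fin n → ℝ))
    (v : Fin k → (Fin n → ℝ)) :
    (∑ a ∈ s, f a) v = ∑ a ∈ s, f a v := by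
  induction s using Finset.cons_induction with
  | empty => simp
  | cons a s ha ih => rw [Finset.sum_cons, Finset.sum_cons, AlternatingMap.add_apply, ih]

lemma eval_eq_of_perm {k : ℕ} (f g : (Fin n → ℝ) [⋀^Fin k]→ₗ[ℝ] ExteriorAlgebra ℝ (Fin n → ℝ))
    (v : Fin k → (Fin n → ℝ)) (σ : Equiv.Perm (Fin k)) (h : f (v ∘ σ) = g (v ∘ σ)) :
    f v = g v := by
  have hf := f.map_perm v σ
  have hg := g.map_perm v σ
  rw [hf, hg] at h
  exact smul_left_cancel _ h

lemma ιMulti_expand {k : ℕ} (v : Fin k → (Fin n → ℝ)) :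
    (ιMulti ℝ k v : ExteriorAlgebra ℝ (Fin n → ℝ)) =
      ∑ A : {A : Finset (Fin n) // A.card = k},
        coordH A.1 (ιMulti ℝ k v) • eWedge n A.1 := by
  classical
  have main : (ιMulti ℝ k (M := Fin n → ℝ)) =
      ∑ A : {A : Finset (Fin n) // A.card = k},
        (LinearMap.toSpanSingleton ℝ _ (eWedge n A.1)).compAlternatingMap (detMap A.1 A.2) := by
    apply Module.Basis.ext_alternating (Pi.basisFun ℝ (Fin n))
    intro m hminj
    apply eval_eq_of_perm _ _ _ (Tuple.sort m)
    have hmono : StrictMono (m ∘ Tuple.sort m) :=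
      (Tuple.monotone_sort m).strictMono_of_injective (hminj.comp (Tuple.sort m).injective)
    set m' : Fin k → Fin n := m ∘ Tuple.sort m with hm'
    have hfun : ((fun i => (Pi.basisFun ℝ (Fin n)) (m i)) ∘ (Tuple.sort m))
        = fun i => Pi.single (m' i) (1 : ℝ) := by
      funext i
      simp [hm', Pi.basisFun_apply]
    rw [hfun]
    set B₀ := Finset.image m' Finset.univ with hB₀def
    have hB₀ : B₀.card = k := by
      rw [hB₀def, Finset.card_image_of_injective _ hmono.injective, Finset.card_univ,
        Fintype.card_fin]
    have hemb : m' = ⇑(B₀.orderEmbOfFin hB₀) :=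
      Finset.orderEmbOfFin_unique hB₀
        (fun x => Finset.mem_image_of_mem _ (Finset.mem_univ x)) hmono
    have hLHS : ιMulti ℝ k (fun i => Pi.single (m' i) (1 : ℝ)) = eWedge n B₀ := by
      rw [eWedge_eq B₀ hB₀, ← hemb]
    rw [hLHS, altmap_sum_apply]
    rw [Finset.sum_eq_single (⟨B₀, hB₀⟩ : {A : Finset (Fin n) // A.card = k})]
    · rw [LinearMap.compAlternatingMap_apply, det_single _ _ _ hmono, if_pos rfl,
        LinearMap.toSpanSingleton_apply, one_smul]
    · intro A _ hA
      rw [LinearMap.compAlternatingMap_apply, det_single _ _ _ hmono, if_neg,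
        LinearMap.toSpanSingleton_apply, zero_smul]
      exact fun hcon => hA (Subtype.ext hcon)
    · intro h
      exact absurd (Finset.mem_univ _) h
  calc (ιMulti ℝ k v : ExteriorAlgebra ℝ (Fin n → ℝ))
      = ∑ A : {A : Finset (Fin n) // A.card = k},
          (LinearMap.toSpanSingleton ℝ _ (eWedge n A.1)).compAlternatingMap (detMap A.1 A.2) v := by
        rw [← altmap_sum_apply, ← main]
    _ = ∑ A : {A : Finset (Fin n) // A.card = k},
          coordH A.1 (ιMulti ℝ k v) • eWedge n A.1 := by
        refine Finset.sum_congr rfl fun A _ => ?_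
        rw [LinearMap.compAlternatingMap_apply, LinearMap.toSpanSingleton_apply,
          coordH_ιMulti, dif_pos A.2]

lemma hasCoords_unique {k : ℕ} (ω : ⋀[ℝ]^k (Fin n → ℝ))
    (c : {A : Finset (Fin n) // A.card = k} → ℝ) (hc : HasCoords ω c)
    (B : {A : Finset (Fin n) // A.card = k}) :
    c B = coordH B.1 (ω : ExteriorAlgebra ℝ (Fin n → ℝ)) := by
  classical
  rw [HasCoords] at hc
  rw [hc, map_sum]
  rw [Finset.sum_eq_single B]
  · rw [map_smul, coordH_eWedge, if_pos rfl, smul_eq_mul, mul_one]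
  · intro A _ hA
    rw [map_smul, coordH_eWedge, if_neg, smul_eq_mul, mul_zero]
    exact fun hcon => hA (Subtype.ext hcon)
  · intro h
    exact absurd (Finset.mem_univ _) h

lemma hasCoords_of_smul {k : ℕ} (s : ℝ) (v : Fin k → (Fin n → ℝ))
    (x : ⋀[ℝ]^k (Fin n → ℝ))
    (hx : (x : ExteriorAlgebra ℝ (Fin n → ℝ)) = s • ιMulti ℝ k v) :
    HasCoords x (fun A => coordH A.1 (x : ExteriorAlgebra ℝ (Fin n → ℝ))) := by
  have hcoef : ∀ A : {A : Finset (Fin n) // A.card = k},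
      coordH A.1 (x : ExteriorAlgebra ℝ (Fin n → ℝ)) = s * coordH A.1 (ιMulti ℝ k v) := by
    intro A; rw [hx, map_smul, smul_eq_mul]
  rw [HasCoords]
  simp only [hcoef]
  rw [hx]
  conv_lhs => rw [ιMulti_expand v]
  rw [Finset.smul_sum]
  refine Finset.sum_congr rfl fun A _ => ?_
  rw [mul_smul]

lemma elim_alternating {k : ℕ} {N : Type*} [AddCommGroup N] [Module ℝ N]
    (F : (Fin n → ℝ) [⋀^Fin k]→ₗ[ℝ] N) (u : Fin k → (Fin n → ℝ)) (j₀ : Fin k)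
    (d : Fin k → ℝ) (hd : d j₀ = 0) :
    F (fun j => u j - d j • u j₀) = F u := by
  classical
  have main : ∀ S : Finset (Fin k), j₀ ∉ S →
      F (fun j => if j ∈ S then u j - d j • u j₀ else u j) = F u := by
    intro S
    induction S using Finset.induction with
    | empty => intro _; simp
    | insert a S ha ih =>
      intro hj₀
      have hj₀S : j₀ ∉ S := fun h => hj₀ (Finset.mem_insert_of_mem h)
      have haj₀ : a ≠ j₀ := fun h => hj₀ (h ▸ Finset.mem_insert_self a S)
      set g : Fin k → (Fin n → ℝ) := fun j => if j ∈ S then u j - d j • u j₀ else u j with hg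
      have hga : g a = u a := by rw [hg]; simp [ha]
      have hgj₀ : g j₀ = u j₀ := by rw [hg]; simp [hj₀S]
      have hfun : (fun j => if j ∈ insert a S then u j - d j • u j₀ else u j)
          = Function.update g a (g a - d a • g j₀) := by
        funext j
        by_cases hja : j = a
        · subst hja
          rw [Function.update_self, if_pos (Finset.mem_insert_self j S), hga, hgj₀]
        · rw [Function.update_of_ne hja, hg]
          simp [Finset.mem_insert, hja]
      rw [hfun, AlternatingMap.map_update_sub, AlternatingMap.map_update_smul,
        Function.update_eq_self, F.map_update_self _ haj₀, smul_zero, sub_zero, ih hj₀S]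
  have := main (Finset.univ.erase j₀) (Finset.notMem_erase j₀ _)
  rw [← this]
  congr 1
  funext j
  by_cases hj : j = j₀
  · subst hj
    rw [if_neg (Finset.notMem_erase j _), hd, zero_smul, sub_zero]
  · rw [if_pos (Finset.mem_erase.2 ⟨hj, Finset.mem_univ j⟩)]


lemma units_neg_one_pow_smul (m : ℕ) (x : ExteriorAlgebra ℝ (Fin n → ℝ)) :
    ((-1 : ℤˣ)^m • x) = ((-1 : ℝ)^m) • x := by
  rw [Units.smul_def]
  have h1 : (((-1 : ℤˣ)^m : ℤˣ) : ℤ) = (-1)^m := by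
    rw [Units.val_pow_eq_pow_val]; norm_num
  rw [h1, ← Int.cast_smul_eq_zsmul ℝ]
  push_cast
  rfl

end NCH

open NCH

/-- Lemma 1.1 (first part): a nonnegative, decomposable, normalized element
`ω ∈ Λᵏ(ℝⁿ)` contains a nonzero nonnegative decomposable `(k-1)`-vector `η`,
i.e. `v ∧ η = ω` for some vector `v`. -/
theorem nonneg_contains_nonneg_hyperplane (n k : ℕ) (hk : 1 ≤ k) (hkn : k ≤ n)
    (ω : ⋀[ℝ]^k (Fin n → ℝ))
    (hnn : IsNonneg ω) (hdec : IsDecomposable ω) (hnorm : IsNormalized ω) :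
    ∃ (η : ⋀[ℝ]^(k-1) (Fin n → ℝ)) (v : Fin n → ℝ),
      η ≠ 0 ∧ IsNonneg η ∧ IsDecomposable η ∧
      ι ℝ v * (η : ExteriorAlgebra ℝ (Fin n → ℝ)) = (ω : ExteriorAlgebra ℝ (Fin n → ℝ)) := by
  classical
  obtain ⟨k', rfl⟩ : ∃ k', k = k' + 1 := ⟨k - 1, (Nat.succ_pred_eq_of_pos hk).symm⟩
  obtain ⟨u, hu⟩ := hdec
  -- the genuine coordinates of ω
  set w : Finset (Fin n) → ℝ :=
    fun B => coordH B (ω : ExteriorAlgebra ℝ (Fin n → ℝ)) with hwdef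
  obtain ⟨c, hc, hcnn⟩ := hnn
  obtain ⟨c', hc', hcsum⟩ := hnorm
  have hwnn : ∀ (B : Finset (Fin n)), B.card = k' + 1 → 0 ≤ w B := by
    intro B hB
    have h2 := hcnn ⟨B, hB⟩
    rw [hasCoords_unique ω c hc ⟨B, hB⟩] at h2
    exact h2
  have hwsum : ∑ A : {A : Finset (Fin n) // A.card = k' + 1}, w A.1 = 1 := by
    rw [← hcsum]
    exact Finset.sum_congr rfl fun A _ => (hasCoords_unique ω c' hc' A).symm
  have hex : ∃ A : {A : Finset (Fin n) // A.card = k' + 1}, w A.1 ≠ 0 := by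
    by_contra h
    push_neg at h
    rw [Finset.sum_eq_zero (fun A _ => h A)] at hwsum
    norm_num at hwsum
  have hcons : ∀ (vv : Fin n → ℝ) (rr : Fin k' → (Fin n → ℝ)),
      (ιMulti ℝ (k' + 1) (Fin.cons vv rr) : ExteriorAlgebra ℝ (Fin n → ℝ))
        = ι ℝ vv * ιMulti ℝ k' rr := by
    intro vv rr
    rw [ιMulti_succ_apply]
    have h0 : (Fin.cons vv rr : Fin (k' + 1) → Fin n → ℝ) 0 = vv := by simp
    have htail : Matrix.vecTail (Fin.cons vv rr : Fin (k' + 1) → Fin n → ℝ) = rr := by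
      funext i
      show (Fin.cons vv rr : Fin (k' + 1) → Fin n → ℝ) i.succ = rr i
      simp
    rw [h0, htail]
  rcases Nat.eq_zero_or_pos k' with hk0 | hk0
  · subst hk0
    refine ⟨⟨1, ?_⟩, u 0, ?_, ?_, ?_, ?_⟩
    · have := ιMulti_range ℝ 0 (M := Fin n → ℝ) (Set.mem_range_self (fun _ => (0 : Fin n → ℝ)))
      rwa [ιMulti_zero_apply] at this
    · intro h
      exact one_ne_zero (congrArg Subtype.val h)
    · refine ⟨fun A => coordH A.1 (1 : ExteriorAlgebra ℝ (Fin n → ℝ)), ?_, ?_⟩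
      · refine hasCoords_of_smul 1 (fun _ => (0 : Fin n → ℝ)) _ ?_
        show (1 : ExteriorAlgebra ℝ (Fin n → ℝ)) = 1 • ιMulti ℝ 0 (fun _ => (0 : Fin n → ℝ))
        rw [ιMulti_zero_apply, one_smul]
      · intro A
        have h1 : (1 : ExteriorAlgebra ℝ (Fin n → ℝ))
            = ιMulti ℝ 0 (fun _ => (0 : Fin n → ℝ)) := (ιMulti_zero_apply _).symm
        show 0 ≤ coordH A.1 (1 : ExteriorAlgebra ℝ (Fin n → ℝ))
        rw [h1, coordH_ιMulti, dif_pos A.2, detMap_apply, Matrix.det_fin_zero]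
        norm_num
    · exact ⟨fun _ => 0, (ιMulti_zero_apply _).symm⟩
    · show ι ℝ (u 0) * (1 : ExteriorAlgebra ℝ (Fin n → ℝ)) = _
      rw [mul_one, hu, ιMulti_succ_apply, ιMulti_zero_apply, mul_one]
  · -- main case
    set T : Finset (Fin n) := Finset.univ.filter
      (fun a => ∃ A : {A : Finset (Fin n) // A.card = k' + 1}, w A.1 ≠ 0 ∧ a ∈ A.1) with hT
    have hTne : T.Nonempty := by
      obtain ⟨A₀, hA₀⟩ := hex
      have hA₀ne : A₀.1.Nonempty := Finset.card_pos.1 (by rw [A₀.2]; omega)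
      obtain ⟨a, ha⟩ := hA₀ne
      exact ⟨a, Finset.mem_filter.2 ⟨Finset.mem_univ a, ⟨A₀, hA₀, ha⟩⟩⟩
    set astar := T.max' hTne with hastar
    have hin_le : ∀ B : Finset (Fin n), B.card = k' + 1 → w B ≠ 0 → ∀ a ∈ B, a ≤ astar := by
      intro B hB hwB a haB
      exact T.le_max' a (Finset.mem_filter.2 ⟨Finset.mem_univ a, ⟨⟨B, hB⟩, hwB, haB⟩⟩)
    obtain ⟨A₁, hA₁w, hA₁mem⟩ :
        ∃ A : {A : Finset (Fin n) // A.card = k' + 1}, w A.1 ≠ 0 ∧ astar ∈ A.1 :=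
      (Finset.mem_filter.1 (T.max'_mem hTne)).2
    have hwB : ∀ (B : Finset (Fin n)) (hB : B.card = k' + 1), w B = detMap B hB u := by
      intro B hB
      show coordH B (ω : ExteriorAlgebra ℝ (Fin n → ℝ)) = _
      rw [hu, coordH_ιMulti, dif_pos hB]
    obtain ⟨j₀, hj₀⟩ : ∃ j₀, u j₀ astar ≠ 0 := by
      by_contra h
      push_neg at h
      apply hA₁w
      rw [hwB A₁.1 A₁.2, detMap_apply]
      obtain ⟨r₁, hr₁⟩ : ∃ r₁, A₁.1.orderEmbOfFin A₁.2 r₁ = astar := by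
        have hr := Finset.range_orderEmbOfFin A₁.1 A₁.2
        have hmem : astar ∈ (A₁.1 : Set (Fin n)) := hA₁mem
        rw [← hr] at hmem; exact hmem
      apply Matrix.det_eq_zero_of_column_eq_zero r₁
      intro i
      rw [Matrix.of_apply, hr₁]
      exact h i
    set cst := u j₀ astar with hcst
    set d : Fin (k' + 1) → ℝ := fun j => if j = j₀ then 0 else u j astar / cst with hd
    set w' : Fin (k' + 1) → (Fin n → ℝ) := fun j => u j - d j • u j₀ with hw'
    have hElim : ιMulti ℝ (k' + 1) w' = ιMulti ℝ (k' + 1) u :=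
      elim_alternating _ u j₀ d (by rw [hd]; simp)
    set v : Fin n → ℝ := cst⁻¹ • u j₀ with hv
    have hva : v astar = 1 := by
      rw [hv]
      show cst⁻¹ * u j₀ astar = 1
      rw [← hcst, inv_mul_cancel₀ hj₀]
    have hw'j₀ : w' j₀ = u j₀ := by
      rw [hw']
      simp [hd]
    have hw'a : ∀ j, j ≠ j₀ → w' j astar = 0 := by
      intro j hj
      rw [hw', hd]
      show u j astar - (if j = j₀ then 0 else u j astar / cst) * u j₀ astar = 0
      rw [if_neg hj, ← hcst, div_mul_cancel₀ _ hj₀, sub_self]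
    set rest : Fin k' → (Fin n → ℝ) := fun i => w' (j₀.succAbove i) with hrest
    have hrest_a : ∀ i, rest i astar = 0 := fun i => hw'a _ (Fin.succAbove_ne j₀ i)
    set g : Fin (k' + 1) → (Fin n → ℝ) := Fin.cons v rest with hg
    have hgσ : Function.update w' j₀ v = g ∘ (Fin.cycleRange j₀) := by
      funext i
      rcases eq_or_ne i j₀ with rfl | hi
      · rw [Function.update_self, Function.comp_apply, Fin.cycleRange_self]
        simp [hg]
      · obtain ⟨j, hj⟩ := Fin.exists_succAbove_eq hi
        rw [← hj, Function.update_of_ne (Fin.succAbove_ne j₀ j), Function.comp_apply,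
          Fin.cycleRange_succAbove]
        simp [hg, hrest]
    set t : ℝ := cst * (-1 : ℝ)^(j₀ : ℕ) with ht
    have htne : t ≠ 0 := mul_ne_zero hj₀ (pow_ne_zero _ (by norm_num))
    have key : (ω : ExteriorAlgebra ℝ (Fin n → ℝ))
        = t • (ι ℝ v * ιMulti ℝ k' rest) := by
      rw [hu, ← hElim]
      have h1 : Function.update w' j₀ (cst • v) = w' := by
        have h2 : cst • v = w' j₀ := by
          rw [hv, hw'j₀, smul_smul, mul_inv_cancel₀ hj₀, one_smul]
        rw [h2, Function.update_eq_self]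
      calc (ιMulti ℝ (k' + 1)) w'
          = (ιMulti ℝ (k' + 1)) (Function.update w' j₀ (cst • v)) := by rw [h1]
        _ = cst • (ιMulti ℝ (k' + 1)) (Function.update w' j₀ v) := by
            rw [AlternatingMap.map_update_smul]
        _ = cst • (ιMulti ℝ (k' + 1)) (g ∘ Fin.cycleRange j₀) := by rw [hgσ]
        _ = cst • ((-1 : ℝ)^(j₀ : ℕ)) • (ιMulti ℝ (k' + 1)) g := by
            rw [AlternatingMap.map_perm, Fin.sign_cycleRange, units_neg_one_pow_smul]
        _ = t • (ιMulti ℝ (k' + 1)) g := by rw [smul_smul, ht]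
        _ = t • (ι ℝ v * ιMulti ℝ k' rest) := by rw [hg, hcons]
    have hW : ∀ (B : Finset (Fin n)) (hB : B.card = k') (haB : astar ∉ B)
        (hC : (insert astar B).card = k' + 1) (rs : Fin (k' + 1)),
        (insert astar B).orderEmbOfFin hC rs = astar →
        w (insert astar B) = t * ((-1 : ℝ)^(rs : ℕ) * detMap B hB rest) := by
      intro B hB haB hC rs hrs
      have h1 : w (insert astar B) = t * detMap (insert astar B) hC (Fin.cons v rest) := by
        show coordH _ (ω : ExteriorAlgebra ℝ (Fin n → ℝ)) = _
        rw [key, map_smul, smul_eq_mul, ← hcons, coordH_ιMulti, dif_pos hC]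
      have h2 : detMap (insert astar B) hC (Fin.cons v rest)
          = (-1 : ℝ)^(rs : ℕ) * detMap B hB rest := by
        rw [detMap_apply, detMap_apply]
        rw [Matrix.det_succ_column _ rs]
        rw [Finset.sum_eq_single 0]
        · have hentry : (Matrix.of fun j r =>
              (Fin.cons v rest : Fin (k' + 1) → Fin n → ℝ) j
                ((insert astar B).orderEmbOfFin hC r)) 0 rs = 1 := by
            rw [Matrix.of_apply, Fin.cons_zero, hrs, hva]
          rw [hentry]
          have hembB : (fun r => (insert astar B).orderEmbOfFin hC (rs.succAbove r))
              = ⇑(B.orderEmbOfFin hB) := by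
            apply Finset.orderEmbOfFin_unique hB
            · intro x
              have hmem : (insert astar B).orderEmbOfFin hC (rs.succAbove x) ∈ insert astar B :=
                Finset.orderEmbOfFin_mem _ _ _
              rcases Finset.mem_insert.1 hmem with h | h
              · exact absurd (((insert astar B).orderEmbOfFin hC).injective
                  (h.trans hrs.symm)) (Fin.succAbove_ne rs x)
              · exact h
            · exact ((insert astar B).orderEmbOfFin hC).strictMono.comp
                (Fin.strictMono_succAbove rs)
          have hminor : (Matrix.of fun j r =>
              (Fin.cons v rest : Fin (k' + 1) → Fin n → ℝ) j
                ((insert astar B).orderEmbOfFin hC r)).submatrix (Fin.succAbove 0) rs.succAbove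
              = Matrix.of fun j r => rest j (B.orderEmbOfFin hB r) := by
            ext j r
            rw [Matrix.submatrix_apply, Matrix.of_apply, Matrix.of_apply, Fin.succAbove_zero,
              Fin.cons_succ]
            rw [congrFun hembB r]
          rw [hminor]
          have hz : (((0 : Fin (k' + 1))) : ℕ) = 0 := rfl
          rw [hz, zero_add]
          ring
        · intro i _ hi
          obtain ⟨j, rfl⟩ := Fin.eq_succ_of_ne_zero hi
          have hentry : (Matrix.of fun j r =>
              (Fin.cons v rest : Fin (k' + 1) → Fin n → ℝ) j
                ((insert astar B).orderEmbOfFin hC r)) j.succ rs = 0 := by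
            rw [Matrix.of_apply, Fin.cons_succ, hrs]
            exact hrest_a j
          rw [hentry, mul_zero, zero_mul]
        · intro hmem
          exact absurd (Finset.mem_univ _) hmem
      rw [h1, h2]
    set s : ℝ := (-1 : ℝ)^k' * t with hs
    set ηa : ExteriorAlgebra ℝ (Fin n → ℝ) := s • ιMulti ℝ k' rest with hηa
    have hηmem : ηa ∈ ⋀[ℝ]^k' (Fin n → ℝ) :=
      Submodule.smul_mem _ _ (ιMulti_range ℝ k' (Set.mem_range_self rest))
    have hcoordη : ∀ (B : Finset (Fin n)) (hB : B.card = k'),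
        coordH B ηa = s * detMap B hB rest := by
      intro B hB
      rw [hηa, map_smul, smul_eq_mul, coordH_ιMulti, dif_pos hB]
    have hgood : ∀ (B : Finset (Fin n)) (hB : B.card = k'), astar ∉ B →
        (∀ b ∈ B, b ≤ astar) → coordH B ηa = w (insert astar B) := by
      intro B hB haB hsmall
      have hC : (insert astar B).card = k' + 1 := by
        rw [Finset.card_insert_of_notMem haB, hB]
      obtain ⟨rs, hrs⟩ : ∃ rs, (insert astar B).orderEmbOfFin hC rs = astar := by
        have hr := Finset.range_orderEmbOfFin (insert astar B) hC
        have hmem : astar ∈ ((insert astar B : Finset (Fin n)) : Set (Fin n)) :=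
          Finset.mem_insert_self _ _
        rw [← hr] at hmem; exact hmem
      have hmax : (insert astar B).max' ⟨astar, Finset.mem_insert_self _ _⟩ = astar := by
        apply le_antisymm
        · apply Finset.max'_le
          intro y hy
          rcases Finset.mem_insert.1 hy with rfl | hyB
          · exact le_refl _
          · exact hsmall y hyB
        · exact Finset.le_max' _ _ (Finset.mem_insert_self _ _)
      have hlast : (insert astar B).orderEmbOfFin hC
          ⟨k' + 1 - 1, Nat.sub_lt (Nat.succ_pos k') Nat.one_pos⟩ = astar := by
        rw [Finset.orderEmbOfFin_last hC (Nat.succ_pos k')]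
        exact hmax
      have hrs_eq : (rs : ℕ) = k' := by
        have h3 := ((insert astar B).orderEmbOfFin hC).injective (hrs.trans hlast.symm)
        rw [h3]
        simp
      rw [hcoordη B hB, hW B hB haB hC rs hrs, hrs_eq, hs]
      ring
    have hnonneg : ∀ (B : Finset (Fin n)) (hB : B.card = k'), 0 ≤ coordH B ηa := by
      intro B hB
      by_cases haB : astar ∈ B
      · obtain ⟨r₁, hr₁⟩ : ∃ r₁, B.orderEmbOfFin hB r₁ = astar := by
          have hr := Finset.range_orderEmbOfFin B hB
          have hmem : astar ∈ (B : Set (Fin n)) := haB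
          rw [← hr] at hmem; exact hmem
        rw [hcoordη B hB, detMap_apply,
          Matrix.det_eq_zero_of_column_eq_zero r₁
            (fun i => by rw [Matrix.of_apply, hr₁]; exact hrest_a i),
          mul_zero]
      · by_cases hbig : ∃ b ∈ B, astar < b
        · obtain ⟨b, hbB, hab⟩ := hbig
          have hC : (insert astar B).card = k' + 1 := by
            rw [Finset.card_insert_of_notMem haB, hB]
          obtain ⟨rs, hrs⟩ : ∃ rs, (insert astar B).orderEmbOfFin hC rs = astar := by
            have hr := Finset.range_orderEmbOfFin (insert astar B) hC
            have hmem : astar ∈ ((insert astar B : Finset (Fin n)) : Set (Fin n)) :=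
              Finset.mem_insert_self _ _
            rw [← hr] at hmem; exact hmem
          have hdet0 : detMap B hB rest = 0 := by
            by_contra hdet
            have hwne : w (insert astar B) ≠ 0 := by
              rw [hW B hB haB hC rs hrs]
              exact mul_ne_zero htne (mul_ne_zero (pow_ne_zero _ (by norm_num)) hdet)
            exact absurd (hin_le _ hC hwne b (Finset.mem_insert_of_mem hbB)) (not_le.2 hab)
          rw [hcoordη B hB, hdet0, mul_zero]
        · push_neg at hbig
          rw [hgood B hB haB hbig]
          exact hwnn _ (by rw [Finset.card_insert_of_notMem haB, hB])
    refine ⟨⟨ηa, hηmem⟩, ((-1 : ℝ)^k') • v, ?_, ?_, ?_, ?_⟩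
    · intro h0
      have h0' : ηa = 0 := congrArg Subtype.val h0
      have hB₁card : (A₁.1.erase astar).card = k' := by
        rw [Finset.card_erase_of_mem hA₁mem, A₁.2]
        omega
      have hins : insert astar (A₁.1.erase astar) = A₁.1 := Finset.insert_erase hA₁mem
      have hsmall : ∀ b ∈ A₁.1.erase astar, b ≤ astar := fun b hb =>
        hin_le A₁.1 A₁.2 hA₁w b (Finset.mem_of_mem_erase hb)
      have := hgood (A₁.1.erase astar) hB₁card (Finset.notMem_erase _ _) hsmall
      rw [h0', map_zero, hins] at this
      exact hA₁w this.symm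
    · exact ⟨fun A => coordH A.1 ηa, hasCoords_of_smul s rest ⟨ηa, hηmem⟩ rfl,
        fun A => hnonneg A.1 A.2⟩
    · refine ⟨Function.update rest ⟨0, hk0⟩ (s • rest ⟨0, hk0⟩), ?_⟩
      show ηa = _
      rw [AlternatingMap.map_update_smul, Function.update_eq_self, hηa]
      rfl
    · show ι ℝ (((-1 : ℝ)^k') • v) * ηa = (ω : ExteriorAlgebra ℝ (Fin n → ℝ))
      rw [map_smul, smul_mul_assoc, hηa, mul_smul_comm, smul_smul, key]
      congr 1
      rw [hs, ← mul_assoc, ← pow_add]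
      rw [Even.neg_one_pow ⟨k', rfl⟩, one_mul]
end
end

section
/- Let 0 ≤ k < n and let ω be a nonnegative, decomposable, normalized element of Λᵏ(ℝⁿ). Then there exists a vector v ∈ ℝⁿ such that v ∧ ω is a nonzero nonnegative element of Λᵏ⁺¹(ℝⁿ). -/
open ExteriorAlgebra

noncomputable section

/-! ### Auxiliary lemmas -/

lemma sort_union' {α : Type*} [LinearOrder α] [DecidableEq α] {s t : Finset α}
    (h : ∀ x ∈ s, ∀ y ∈ t, x < y) :
    (s ∪ t).sort (· ≤ ·) = s.sort (· ≤ ·) ++ t.sort (· ≤ ·) := by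
  have hd : Disjoint s t := by
    rw [Finset.disjoint_left]
    intro a ha hat
    exact absurd (h a ha a hat) (lt_irrefl a)
  refine (fun hp h1 h2 => List.Perm.eq_of_pairwise' (r := (· ≤ · : α → α → Prop)) h1 h2 hp) ?_ ?_ ?_
  · rw [← Multiset.coe_eq_coe]
    show ((s ∪ t).sort (· ≤ ·) : Multiset α) = (↑(s.sort (· ≤ ·)) + ↑(t.sort (· ≤ ·)) : Multiset α)
    rw [Finset.sort_eq, Finset.sort_eq, Finset.sort_eq, ← Finset.disjUnion_eq_union s t hd]
    rfl
  · exact Finset.pairwise_sort _ _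
  · rw [List.pairwise_append]
    refine ⟨Finset.pairwise_sort _ _, Finset.pairwise_sort _ _, ?_⟩
    intro x hx y hy
    exact (h x ((Finset.mem_sort _).mp hx) y ((Finset.mem_sort _).mp hy)).le

lemma iota_mul_prod_swap {R M : Type*} [CommRing R] [AddCommGroup M] [Module R M]
    (x : M) : ∀ (l : List M),
    ι R x * (l.map (ι R)).prod = (-1 : R) ^ l.length • ((l.map (ι R)).prod * ι R x)
  | [] => by simp
  | a :: l => by
    have hswap : ι R x * ι R a = -(ι R a * ι R x) :=
      eq_neg_of_add_eq_zero_left (ι_add_mul_swap x a)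
    rw [List.map_cons, List.prod_cons, ← mul_assoc, hswap, neg_mul, mul_assoc,
      iota_mul_prod_swap x l, mul_smul_comm, List.length_cons, pow_succ, mul_neg_one,
      neg_smul, mul_assoc]

lemma iota_single_swap {n : ℕ} (x : Fin n → ℝ) (l : List (Fin n)) :
    ι ℝ x * ((l.map fun j => ι ℝ (Pi.single j (1:ℝ))).prod) =
      (-1:ℝ) ^ l.length • (((l.map fun j => ι ℝ (Pi.single j (1:ℝ))).prod) * ι ℝ x) := by
  have := iota_mul_prod_swap (R := ℝ) x (l.map fun j => (Pi.single j (1:ℝ) : Fin n → ℝ))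
  simpa [List.map_map, Function.comp_def] using this

lemma key_notmem (n : ℕ) (i : Fin n) (A : Finset (Fin n))
    (hsub : Finset.Iio i ⊆ A) (hiA : i ∉ A) :
    ι ℝ (Pi.single i (1:ℝ)) * eWedge n A = ((-1:ℝ)^(i:ℕ)) • eWedge n (insert i A) := by
  set s₁ := Finset.Iio i with hs₁
  set t := A \ s₁ with ht
  have hA : A = s₁ ∪ t := (Finset.union_sdiff_of_subset hsub).symm
  have hcross1 : ∀ x ∈ s₁, ∀ y ∈ t, x < y := by
    intro x hx y hy
    have hxi : x < i := Finset.mem_Iio.mp hx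
    have hyi : ¬ y < i := fun hcon => (Finset.mem_sdiff.mp hy).2 (Finset.mem_Iio.mpr hcon)
    exact lt_of_lt_of_le hxi (le_of_not_gt hyi)
  have hit : i ∉ t := fun hcon => hiA (Finset.mem_sdiff.mp hcon).1
  have hile : ∀ b ∈ t, i ≤ b := by
    intro b hb
    exact le_of_not_gt (fun hcon => (Finset.mem_sdiff.mp hb).2 (Finset.mem_Iio.mpr hcon))
  have hcross2 : ∀ x ∈ s₁, ∀ y ∈ insert i t, x < y := by
    intro x hx y hy
    rcases Finset.mem_insert.mp hy with rfl | hy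
    · exact Finset.mem_Iio.mp hx
    · exact hcross1 x hx y hy
  have hins : insert i A = s₁ ∪ insert i t := by
    rw [Finset.union_insert, ← hA]
  have hsortA : A.sort (· ≤ ·) = s₁.sort (· ≤ ·) ++ t.sort (· ≤ ·) := by
    conv_lhs => rw [hA]
    exact sort_union' hcross1
  have hsortI : (insert i A).sort (· ≤ ·) = s₁.sort (· ≤ ·) ++ i :: t.sort (· ≤ ·) := by
    rw [hins, sort_union' hcross2,
      show Finset.sort (insert i t) (· ≤ ·) = i :: Finset.sort t (· ≤ ·) from
        Finset.sort_insert _ hile hit]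
  have hlen : (s₁.sort (· ≤ ·)).length = (i : ℕ) := by
    rw [Finset.length_sort, hs₁, Fin.card_Iio]
  rw [eWedge, eWedge, hsortA, hsortI, List.map_append, List.prod_append,
    List.map_append, List.map_cons, List.prod_append, List.prod_cons,
    ← mul_assoc, iota_single_swap, hlen, smul_mul_assoc, mul_assoc]

lemma key_mem (n : ℕ) (i : Fin n) (A : Finset (Fin n))
    (hsub : Finset.Iio i ⊆ A) (hiA : i ∈ A) :
    ι ℝ (Pi.single i (1:ℝ)) * eWedge n A = 0 := by
  set s₁ := Finset.Iio i with hs₁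
  set t := A \ Finset.Iic i with ht
  have hit : i ∉ t := by
    intro hcon
    exact (Finset.mem_sdiff.mp hcon).2 (Finset.mem_Iic.mpr le_rfl)
  have hile : ∀ b ∈ t, i ≤ b := by
    intro b hb
    exact le_of_lt (lt_of_not_ge (fun hcon => (Finset.mem_sdiff.mp hb).2 (Finset.mem_Iic.mpr hcon)))
  have hcross2 : ∀ x ∈ s₁, ∀ y ∈ insert i t, x < y := by
    intro x hx y hy
    have hxi : x < i := Finset.mem_Iio.mp hx
    rcases Finset.mem_insert.mp hy with rfl | hy
    · exact hxi
    · exact lt_of_lt_of_le hxi (hile y hy)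
  have hA : A = s₁ ∪ insert i t := by
    ext a
    simp only [Finset.mem_union, Finset.mem_insert, ht, hs₁, Finset.mem_sdiff,
      Finset.mem_Iio, Finset.mem_Iic]
    constructor
    · intro ha
      rcases lt_trichotomy a i with h | h | h
      · exact Or.inl h
      · exact Or.inr (Or.inl h)
      · exact Or.inr (Or.inr ⟨ha, not_le.mpr h⟩)
    · rintro (h | rfl | ⟨h, _⟩)
      · exact hsub (Finset.mem_Iio.mpr h)
      · exact hiA
      · exact h
  have hsortA : A.sort (· ≤ ·) = s₁.sort (· ≤ ·) ++ i :: t.sort (· ≤ ·) := by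
    conv_lhs => rw [hA]
    rw [sort_union' hcross2,
      show Finset.sort (insert i t) (· ≤ ·) = i :: Finset.sort t (· ≤ ·) from
        Finset.sort_insert _ hile hit]
  rw [eWedge, hsortA, List.map_append, List.map_cons, List.prod_append, List.prod_cons,
    ← mul_assoc, iota_single_swap, smul_mul_assoc, mul_assoc]
  have h0 : ι ℝ (Pi.single i (1:ℝ)) * (ι ℝ (Pi.single i (1:ℝ)) *
      (List.map (fun j => ι ℝ (Pi.single j (1:ℝ))) (t.sort (· ≤ ·))).prod) = 0 := by
    rw [← mul_assoc, ι_sq_zero, zero_mul]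
  rw [h0, mul_zero, smul_zero]

lemma eWedge_eq_iMulti (n m : ℕ) (B : Finset (Fin n)) (h : B.card = m) :
    eWedge n B = ιMulti ℝ m (fun j => Pi.single (B.orderEmbOfFin h j) (1 : ℝ)) := by
  rw [ιMulti_apply, eWedge]
  refine congrArg List.prod ?_
  apply List.ext_getElem
  · simp [h]
  · intro j h1 h2
    simp only [List.getElem_map, List.getElem_ofFn]
    congr 1

/-- Family of alternating maps computing the `B`-minor determinant in degree `m`. -/
def coordFam (n m : ℕ) (B : Finset (Fin n)) (h : B.card = m) :
    ∀ i, (Fin n → ℝ) [⋀^Fin i]→ₗ[ℝ] ℝ := fun i =>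
  if hi : i = m then
    (Matrix.detRowAlternating).compLinearMap
      (LinearMap.funLeft ℝ ℝ (B.orderEmbOfFin (h.trans hi.symm)))
  else 0

/-- The linear functional computing the `B`-coordinate on `Λᵐ(ℝⁿ)`. -/
def coordF (n m : ℕ) (B : Finset (Fin n)) (h : B.card = m) :
    ExteriorAlgebra ℝ (Fin n → ℝ) →ₗ[ℝ] ℝ :=
  liftAlternating (coordFam n m B h)

lemma coordF_eWedge (n m : ℕ) (B B' : Finset (Fin n)) (h : B.card = m) (h' : B'.card = m) :
    coordF n m B h (eWedge n B') = if B' = B then 1 else 0 := by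
  rw [eWedge_eq_iMulti n m B' h', coordF, liftAlternating_apply_ιMulti]
  rw [coordFam, dif_pos rfl]
  simp only [AlternatingMap.compLinearMap_apply]
  show Matrix.det _ = _
  by_cases hBB : B' = B
  · rw [if_pos hBB]
    subst hBB
    have hM : (Matrix.of fun i j => Pi.single (M := fun _ => ℝ) ((B'.orderEmbOfFin h') i) 1
        ((B'.orderEmbOfFin h') j)) = (1 : Matrix (Fin m) (Fin m) ℝ) := by
      ext i j
      simp only [Matrix.of_apply, Matrix.one_apply, Pi.single_apply,
        EmbeddingLike.apply_eq_iff_eq]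
      simp [eq_comm]
    show (Matrix.of fun i j => Pi.single (M := fun _ => ℝ) ((B'.orderEmbOfFin h') i) 1
        ((B'.orderEmbOfFin h') j)).det = 1
    rw [hM, Matrix.det_one]
  · rw [if_neg hBB]
    have hne : ¬ B' ⊆ B := fun hsub =>
      hBB (Finset.eq_of_subset_of_card_le hsub (by rw [h, h']))
    obtain ⟨a, haB', haB⟩ := Finset.not_subset.mp hne
    obtain ⟨i₀, hi₀⟩ : ∃ i₀, B'.orderEmbOfFin h' i₀ = a := by
      have := Finset.range_orderEmbOfFin B' h'
      rw [Set.ext_iff] at this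
      exact (this a).mpr haB'
    apply Matrix.det_eq_zero_of_row_eq_zero i₀
    intro j
    simp only [Matrix.of_apply, LinearMap.funLeft_apply, Pi.single_apply]
    rw [if_neg]
    intro hh
    have : a ∈ B := by
      rw [← hi₀, ← hh]
      exact Finset.orderEmbOfFin_mem B _ j
    exact haB this

lemma hasCoords_unique {n m : ℕ} (τ : ⋀[ℝ]^m (Fin n → ℝ))
    (c₀ : {A : Finset (Fin n) // A.card = m} → ℝ) (h₀ : HasCoords τ c₀)
    (B : {A : Finset (Fin n) // A.card = m}) :
    c₀ B = coordF n m B.1 B.2 (τ : ExteriorAlgebra ℝ (Fin n → ℝ)) := by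
  rw [HasCoords] at h₀
  rw [h₀, map_sum]
  have hterm : ∀ A : {A : Finset (Fin n) // A.card = m},
      coordF n m B.1 B.2 (c₀ A • eWedge n A.1) = if A = B then c₀ A else 0 := by
    intro A
    rw [map_smul, coordF_eWedge n m B.1 A.1 B.2 A.2, smul_eq_mul]
    by_cases hAB : A = B
    · rw [if_pos hAB, if_pos (by rw [hAB]), mul_one]
    · rw [if_neg hAB, if_neg (fun hh => hAB (Subtype.ext hh)), mul_zero]
  rw [Finset.sum_congr rfl fun A _ => hterm A, Finset.sum_ite_eq' Finset.univ B,
    if_pos (Finset.mem_univ B)]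

/-- Lemma 1.2 (first part): a nonnegative, decomposable, normalized element
`ω ∈ Λᵏ(ℝⁿ)` with `k < n` is contained in a nonzero nonnegative `(k+1)`-vector,
namely `v ∧ ω` for a suitable vector `v`. -/
theorem nonneg_contained_in_nonneg (n k : ℕ) (hkn : k < n)
    (ω : ⋀[ℝ]^k (Fin n → ℝ))
    (hnn : IsNonneg ω) (hdec : IsDecomposable ω) (hnorm : IsNormalized ω) :
    ∃ (v : Fin n → ℝ) (η : ⋀[ℝ]^(k+1) (Fin n → ℝ)),
      (η : ExteriorAlgebra ℝ (Fin n → ℝ)) =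
        ι ℝ v * (ω : ExteriorAlgebra ℝ (Fin n → ℝ)) ∧
      η ≠ 0 ∧ IsNonneg η := by
  classical
  obtain ⟨c, hc, hcnn⟩ := hnn
  obtain ⟨c', hc', hsum⟩ := hnorm
  have hcc' : c = c' := funext fun B => by
    rw [hasCoords_unique ω c hc B, ← hasCoords_unique ω c' hc' B]
  rw [← hcc'] at hsum
  have hex : ∃ i : Fin n, (∃ A₀ : {A : Finset (Fin n) // A.card = k}, c A₀ ≠ 0 ∧ i ∉ A₀.1) ∧
      (∀ A : {A : Finset (Fin n) // A.card = k}, c A ≠ 0 → Finset.Iio i ⊆ A.1) := by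
    obtain ⟨A₀', -, hA₀'⟩ := Finset.exists_ne_zero_of_sum_ne_zero
      (s := (Finset.univ : Finset {A : Finset (Fin n) // A.card = k}))
      (by rw [hsum]; exact one_ne_zero)
    set S : Finset (Fin n) := Finset.univ.filter
      (fun j => ∃ A : {A : Finset (Fin n) // A.card = k}, c A ≠ 0 ∧ j ∉ A.1) with hS
    have hSne : S.Nonempty := by
      obtain ⟨j, hj⟩ : ∃ j, j ∉ A₀'.1 := by
        by_contra hcon
        push_neg at hcon
        have huniv : A₀'.1 = Finset.univ := Finset.eq_univ_iff_forall.mpr hcon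
        have hcard := A₀'.2
        rw [huniv, Finset.card_univ, Fintype.card_fin] at hcard
        omega
      exact ⟨j, Finset.mem_filter.mpr ⟨Finset.mem_univ j, A₀', hA₀', hj⟩⟩
    refine ⟨S.min' hSne, (Finset.mem_filter.mp (S.min'_mem hSne)).2, ?_⟩
    intro A hA j hj
    by_contra hjA
    have hjS : j ∈ S := Finset.mem_filter.mpr ⟨Finset.mem_univ j, A, hA, hjA⟩
    exact absurd (S.min'_le j hjS) (not_le.mpr (Finset.mem_Iio.mp hj))
  obtain ⟨i, ⟨A₀, hA₀ne, hiA₀⟩, hmin⟩ := hex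
  set cExt : Finset (Fin n) → ℝ := fun s => if h : s.card = k then c ⟨s, h⟩ else 0 with hcExt
  set d : {B : Finset (Fin n) // B.card = k + 1} → ℝ :=
    fun B => if i ∈ B.1 then cExt (B.1.erase i) else 0 with hd
  set v : Fin n → ℝ := ((-1:ℝ)^(i:ℕ)) • (Pi.single i 1 : Fin n → ℝ) with hv
  have hX : ι ℝ v * (ω : ExteriorAlgebra ℝ (Fin n → ℝ)) =
      ∑ B : {B : Finset (Fin n) // B.card = k+1}, d B • eWedge n B.1 := by
    rw [hc, Finset.mul_sum]
    have hterm : ∀ A : {A : Finset (Fin n) // A.card = k},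
        ι ℝ v * (c A • eWedge n A.1) =
          (if i ∉ A.1 then c A • eWedge n (insert i A.1) else 0) := by
      intro A
      by_cases hcA : c A = 0
      · rw [hcA, zero_smul, mul_zero]
        by_cases hiA : i ∉ A.1 <;> simp [hiA]
      · have hsub := hmin A hcA
        have hιv : ι ℝ v = ((-1:ℝ)^(i:ℕ)) • ι ℝ (Pi.single i 1) := by rw [hv, map_smul]
        rw [mul_smul_comm, hιv, smul_mul_assoc]
        by_cases hiA : i ∈ A.1
        · rw [if_neg (not_not_intro hiA), key_mem n i A.1 hsub hiA, smul_zero, smul_zero]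
        · rw [if_pos hiA, key_notmem n i A.1 hsub hiA, smul_smul, smul_smul, mul_assoc,
            ← pow_add, ← two_mul, pow_mul]
          norm_num
    rw [Finset.sum_congr rfl fun A _ => hterm A]
    have hterm2 : ∀ B : {B : Finset (Fin n) // B.card = k+1},
        d B • eWedge n B.1 = (if i ∈ B.1 then cExt (B.1.erase i) • eWedge n B.1 else 0) := by
      intro B
      by_cases hB : i ∈ B.1 <;> simp [hd, hB]
    rw [Finset.sum_congr rfl fun B _ => hterm2 B]
    rw [← Finset.sum_filter, ← Finset.sum_filter]
    refine Finset.sum_bij'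
      (i := fun A hA => (⟨insert i A.1, by
        rw [Finset.card_insert_of_notMem (by simpa using (Finset.mem_filter.mp hA).2), A.2]⟩ :
          {B : Finset (Fin n) // B.card = k+1}))
      (j := fun B hB => (⟨B.1.erase i, by
        rw [Finset.card_erase_of_mem (by simpa using (Finset.mem_filter.mp hB).2), B.2]; omega⟩ :
          {A : Finset (Fin n) // A.card = k}))
      ?_ ?_ ?_ ?_ ?_
    · intro A hA
      exact Finset.mem_filter.mpr ⟨Finset.mem_univ _, Finset.mem_insert_self i A.1⟩
    · intro B hB
      exact Finset.mem_filter.mpr ⟨Finset.mem_univ _, Finset.notMem_erase i B.1⟩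
    · intro A hA
      exact Subtype.ext (by
        simp only
        rw [Finset.erase_insert (by simpa using (Finset.mem_filter.mp hA).2)])
    · intro B hB
      exact Subtype.ext (by
        simp only
        rw [Finset.insert_erase (by simpa using (Finset.mem_filter.mp hB).2)])
    · intro A hA
      simp only
      rw [Finset.erase_insert (by simpa using (Finset.mem_filter.mp hA).2), hcExt]
      simp only
      rw [dif_pos A.2, Subtype.coe_eta]
  have hmem : ι ℝ v * (ω : ExteriorAlgebra ℝ (Fin n → ℝ)) ∈ ⋀[ℝ]^(k+1) (Fin n → ℝ) := by
    show _ ∈ LinearMap.range (ι ℝ (M := Fin n → ℝ)) ^ (k+1)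
    rw [pow_succ']
    exact Submodule.mul_mem_mul (LinearMap.mem_range_self _ v) ω.2
  refine ⟨v, ⟨ι ℝ v * ↑ω, hmem⟩, rfl, ?_, ?_⟩
  · intro hzero
    set B₀ : {B : Finset (Fin n) // B.card = k+1} :=
      ⟨insert i A₀.1, by rw [Finset.card_insert_of_notMem hiA₀, A₀.2]⟩ with hB₀
    have hdB₀ : d B₀ ≠ 0 := by
      show (if i ∈ insert i A₀.1 then cExt ((insert i A₀.1).erase i) else 0) ≠ 0
      rw [if_pos (Finset.mem_insert_self i A₀.1)]
      rw [Finset.erase_insert hiA₀]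
      show (if h : (A₀.1).card = k then c ⟨A₀.1, h⟩ else 0) ≠ 0
      rw [dif_pos A₀.2, Subtype.coe_eta]
      exact hA₀ne
    have hCoords : HasCoords (⟨ι ℝ v * ↑ω, hmem⟩ : ⋀[ℝ]^(k+1) (Fin n → ℝ)) d := hX
    have hval := hasCoords_unique _ d hCoords B₀
    rw [hzero] at hval
    simp only [ZeroMemClass.coe_zero, map_zero] at hval
    exact hdB₀ hval
  · refine ⟨d, hX, fun B => ?_⟩
    show 0 ≤ if i ∈ B.1 then cExt (B.1.erase i) else 0
    by_cases hB : i ∈ B.1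
    · rw [if_pos hB]
      show 0 ≤ if h : ((B.1).erase i).card = k then c ⟨(B.1).erase i, h⟩ else 0
      by_cases hcard : ((B.1).erase i).card = k
      · rw [dif_pos hcard]
        exact hcnn _
      · rw [dif_neg hcard]
    · rw [if_neg hB]
end
end

section
/- Let 0 ≤ k < n and let ω be a positive, decomposable, normalized element of Λᵏ(ℝⁿ). Then there exists a vector v ∈ ℝⁿ such that v ∧ ω is a positive element of Λᵏ⁺¹(ℝⁿ). -/
open ExteriorAlgebra

noncomputable section

namespace Aux

variable {n : ℕ}

/-- standard basis vectors in the exterior algebra -/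
def g (i : Fin n) : ExteriorAlgebra ℝ (Fin n → ℝ) := ι ℝ (Pi.single i (1 : ℝ))

lemma anticomm (x y : Fin n → ℝ) :
    ι ℝ x * ι ℝ y = - (ι ℝ y * ι ℝ x) := by
  have := ι_add_mul_swap (R := ℝ) x y
  rw [eq_neg_iff_add_eq_zero]
  exact this

lemma mul_prod_of_mem (l : List (Fin n)) (i : Fin n) (hi : i ∈ l) :
    g i * (l.map g).prod = 0 := by
  induction l with
  | nil => simp at hi
  | cons a t ih =>
    rw [List.map_cons, List.prod_cons, ← mul_assoc]
    rcases List.mem_cons.1 hi with h | h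
    · subst h
      have h0 : g i * g i = 0 := ι_sq_zero _
      rw [h0, zero_mul]
    · rw [show g i * g a = -(g a * g i) from Aux.anticomm _ _, neg_mul, mul_assoc,
        ih h, mul_zero, neg_zero]

lemma prod_orderedInsert (i : Fin n) :
    ∀ (l : List (Fin n)), (∀ j ∈ l, j ≠ i) → l.Pairwise (· ≤ ·) →
    ((l.orderedInsert (· ≤ ·) i).map g).prod =
      ((-1 : ℝ) ^ ((l.filter (fun j => j < i)).length)) • (g i * (l.map g).prod) := by
  intro l
  induction l with
  | nil => intro _ _; simp [List.orderedInsert]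
  | cons a t ih =>
    intro hne hs
    by_cases h : i ≤ a
    · rw [List.orderedInsert, if_pos h]
      have hfil : (a :: t).filter (fun j => j < i) = [] := by
        rw [List.filter_eq_nil_iff]
        intro j hj
        have hji : i ≤ j := by
          rcases List.mem_cons.1 hj with rfl | hj'
          · exact h
          · exact h.trans (List.rel_of_pairwise_cons hs hj')
        simp only [decide_eq_true_eq]
        exact not_lt.2 hji
      rw [hfil]
      simp
    · have hai : a < i := lt_of_le_of_ne (le_of_not_ge h) (hne a List.mem_cons_self)
      rw [List.orderedInsert]
      rw [if_neg h]
      rw [List.map_cons, List.prod_cons,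
        ih (fun j hj => hne j (List.mem_cons_of_mem a hj)) (List.pairwise_cons.1 hs).2]
      have hfil : ((a :: t).filter (fun j => j < i)).length =
          (t.filter (fun j => j < i)).length + 1 := by
        rw [List.filter_cons]
        simp [hai]
      rw [hfil, List.map_cons, List.prod_cons, mul_smul_comm, ← mul_assoc,
        show g a * g i = -(g i * g a) from anticomm _ _, pow_succ]
      rw [neg_mul, mul_assoc]
      simp [smul_smul]

end Aux

namespace Aux

lemma sort_insert_eq (i : Fin n) (A : Finset (Fin n)) (hi : i ∉ A) :
    (insert i A).sort (· ≤ ·) = (A.sort (· ≤ ·)).orderedInsert (· ≤ ·) i := by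
  refine (fun h1 h2 h3 => List.Perm.eq_of_pairwise' (r := (· ≤ ·)) h2 h3 h1) ?_ ?_ ?_
  · refine ((insert i A).sort_perm_toList _).trans ?_
    refine (Finset.toList_insert hi).trans ?_
    exact ((A.sort_perm_toList (· ≤ ·)).symm.cons i).trans
      (List.perm_orderedInsert _ _ _).symm
  · exact Finset.pairwise_sort _ _
  · exact (Finset.pairwise_sort A (· ≤ ·)).orderedInsert _ _

lemma g_mul_eWedge_of_not_mem (i : Fin n) (A : Finset (Fin n)) (hi : i ∉ A) :
    g i * eWedge n A =
      ((-1 : ℝ) ^ (((A.sort (· ≤ ·)).filter (fun j => j < i)).length)) •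
        eWedge n (insert i A) := by
  have hne : ∀ j ∈ A.sort (· ≤ ·), j ≠ i := by
    intro j hj
    rintro rfl
    exact hi (Finset.mem_sort (α := Fin n) (· ≤ ·) |>.1 hj)
  have h := prod_orderedInsert i (A.sort (· ≤ ·)) hne (Finset.pairwise_sort _ _)
  rw [← sort_insert_eq i A hi] at h
  have h2 : eWedge n (insert i A) =
      ((-1 : ℝ) ^ (((A.sort (· ≤ ·)).filter (fun j => j < i)).length)) •
        (g i * eWedge n A) := h
  rw [h2, smul_smul, ← pow_add, ← two_mul, pow_mul]
  norm_num

lemma g_mul_eWedge_of_mem (i : Fin n) (A : Finset (Fin n)) (hi : i ∈ A) :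
    g i * eWedge n A = 0 :=
  mul_prod_of_mem _ _ ((Finset.mem_sort (α := Fin n) (· ≤ ·)).2 hi)

lemma ι_eq_sum (v : Fin n → ℝ) : ι ℝ (M := Fin n → ℝ) v = ∑ i, v i • g i := by
  have hv : v = ∑ i, v i • (Pi.single i (1 : ℝ) : Fin n → ℝ) := by
    conv_lhs => rw [← Finset.univ_sum_single v]
    refine Finset.sum_congr rfl fun i _ => ?_
    rw [← Pi.single_smul, smul_eq_mul, mul_one]
  conv_lhs => rw [hv]
  rw [map_sum]
  simp only [map_smul]
  rfl

end Aux

namespace Aux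

/-- number of elements of `A` less than `i` -/
def m (i : Fin n) (A : Finset (Fin n)) : ℕ :=
  ((A.sort (· ≤ ·)).filter (fun j => j < i)).length

lemma card_erase {k : ℕ} (B : {B : Finset (Fin n) // B.card = k + 1}) (i : Fin n)
    (hi : i ∈ B.1) : (B.1.erase i).card = k := by
  rw [Finset.card_erase_of_mem hi, B.2]
  rfl

/-- coordinates of `v ∧ ω` -/
def cSucc {k : ℕ} (c : {A : Finset (Fin n) // A.card = k} → ℝ) (v : Fin n → ℝ)
    (B : {B : Finset (Fin n) // B.card = k + 1}) : ℝ :=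
  ∑ i ∈ B.1.attach, (-1 : ℝ) ^ (m i.1 (B.1.erase i.1)) *
    (v i.1 * c ⟨B.1.erase i.1, card_erase B i.1 i.2⟩)

lemma expand {k : ℕ} (c : {A : Finset (Fin n) // A.card = k} → ℝ) (v : Fin n → ℝ) :
    ι ℝ v * (∑ A : {A : Finset (Fin n) // A.card = k}, c A • eWedge n A.1) =
    ∑ B : {B : Finset (Fin n) // B.card = k + 1}, cSucc c v B • eWedge n B.1 := by
  rw [ι_eq_sum, Finset.sum_mul_sum]
  have step1 : ∀ (i : Fin n) (A : {A : Finset (Fin n) // A.card = k}),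
      (v i • g i) * (c A • eWedge n A.1) =
      if hi : i ∈ A.1 then 0 else
        ((-1 : ℝ) ^ (m i A.1) * (v i * c A)) • eWedge n (insert i A.1) := by
    intro i A
    rw [smul_mul_smul_comm]
    split_ifs with hi
    · rw [g_mul_eWedge_of_mem i A.1 hi, smul_zero]
    · rw [g_mul_eWedge_of_not_mem i A.1 hi, smul_smul, mul_comm]
      rfl
  simp only [step1]
  rw [Finset.sum_comm]
  have step2 : ∀ A : {A : Finset (Fin n) // A.card = k},
      (∑ i : Fin n, if hi : i ∈ A.1 then (0 : ExteriorAlgebra ℝ (Fin n → ℝ)) else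
        ((-1 : ℝ) ^ (m i A.1) * (v i * c A)) • eWedge n (insert i A.1)) =
      ∑ i ∈ A.1ᶜ, ((-1 : ℝ) ^ (m i A.1) * (v i * c A)) • eWedge n (insert i A.1) := by
    intro A
    rw [← Finset.sum_compl_add_sum A.1]
    have h1 : (∑ i ∈ A.1, if hi : i ∈ A.1 then (0 : ExteriorAlgebra ℝ (Fin n → ℝ)) else
        ((-1 : ℝ) ^ (m i A.1) * (v i * c A)) • eWedge n (insert i A.1)) = 0 :=
      Finset.sum_eq_zero fun i hi => dif_pos hi
    rw [h1, add_zero]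
    exact Finset.sum_congr rfl fun i hi => dif_neg (Finset.mem_compl.1 hi)
  simp only [step2]
  have step3 : ∀ B : {B : Finset (Fin n) // B.card = k + 1},
      cSucc c v B • eWedge n B.1 =
      ∑ i ∈ B.1.attach, ((-1 : ℝ) ^ (m i.1 (B.1.erase i.1)) *
        (v i.1 * c ⟨B.1.erase i.1, card_erase B i.1 i.2⟩)) • eWedge n B.1 := by
    intro B
    rw [cSucc, Finset.sum_smul]
  simp only [step3]
  rw [Finset.sum_sigma', Finset.sum_sigma']
  refine Finset.sum_bij'
    (fun x hx => ⟨⟨insert x.2 x.1.1, by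
      rw [Finset.card_insert_of_notMem
        (Finset.mem_compl.1 (Finset.mem_sigma.1 hx).2), x.1.2]⟩,
      ⟨x.2, Finset.mem_insert_self _ _⟩⟩)
    (fun y hy => ⟨⟨y.1.1.erase y.2.1, card_erase y.1 y.2.1 y.2.2⟩, y.2.1⟩)
    ?_ ?_ ?_ ?_ ?_
  · intro x hx
    simp [Finset.mem_sigma]
  · intro y hy
    simp [Finset.mem_sigma]
  · intro x hx
    have hx2 := Finset.mem_compl.1 (Finset.mem_sigma.1 hx).2
    ext
    · simp [Finset.erase_insert hx2]
    · rfl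
  · intro y hy
    have h2 : y.2.1 ∈ y.1.1 := y.2.2
    ext
    · simp [Finset.insert_erase h2]
    · rfl
  · intro x hx
    have hx2 := Finset.mem_compl.1 (Finset.mem_sigma.1 hx).2
    have he : (insert x.2 x.1.1).erase x.2 = x.1.1 := Finset.erase_insert hx2
    simp only [he, Subtype.coe_eta]

end Aux

namespace Aux

lemma m_max' (B : Finset (Fin n)) (hB : B.Nonempty) :
    m (B.max' hB) (B.erase (B.max' hB)) = B.card - 1 := by
  unfold m
  rw [List.filter_eq_self.2, Finset.length_sort]
  · rw [Finset.card_erase_of_mem (B.max'_mem hB)]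
  · intro j hj
    have hj' : j ∈ B.erase (B.max' hB) := (Finset.mem_sort (α := Fin n) (· ≤ ·)).1 hj
    have h1 : j ≠ B.max' hB := Finset.ne_of_mem_erase hj'
    have h2 : j ≤ B.max' hB := B.le_max' j (Finset.mem_of_mem_erase hj')
    simpa using lt_of_le_of_ne h2 h1

lemma subtype_nonempty {k : ℕ} (hk : k ≤ n) :
    Nonempty {A : Finset (Fin n) // A.card = k} := by
  obtain ⟨A, -, hA⟩ := Finset.exists_subset_card_eq
    (show k ≤ (Finset.univ : Finset (Fin n)).card by simpa using hk)
  exact ⟨⟨A, hA⟩⟩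

lemma cSucc_pos {k : ℕ} (hkn : k < n) (c : {A : Finset (Fin n) // A.card = k} → ℝ)
    (hc : ∀ A, 0 < c A) :
    ∃ v : Fin n → ℝ, ∀ B, 0 < cSucc c v B := by
  haveI := subtype_nonempty (n := n) hkn.le
  set ε := Finset.univ.inf' Finset.univ_nonempty c with hεdef
  set M := Finset.univ.sup' Finset.univ_nonempty c with hMdef
  have hε : 0 < ε := (Finset.lt_inf'_iff _).2 fun A _ => hc A
  have hεle : ∀ A, ε ≤ c A := fun A => Finset.inf'_le c (Finset.mem_univ A)
  have hMle : ∀ A, c A ≤ M := fun A => Finset.le_sup' c (Finset.mem_univ A)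
  have hM : 0 < M := lt_of_lt_of_le (hc Classical.ofNonempty) (hMle _)
  set t : ℝ := n * M / ε + 1 with htdef
  have h1t : 1 ≤ t := by
    have h0 : 0 ≤ (n : ℝ) * M / ε := div_nonneg (mul_nonneg (Nat.cast_nonneg n) hM.le) hε.le
    rw [htdef]
    linarith
  have ht0 : 0 < t := lt_of_lt_of_le one_pos h1t
  have hnMε : (n : ℝ) * M < ε * t := by
    rw [htdef, mul_add, mul_one, mul_div_cancel₀ _ (ne_of_gt hε)]
    linarith
  refine ⟨fun i => (-1 : ℝ) ^ k * t ^ (i : ℕ), fun B => ?_⟩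
  have hBne : B.1.Nonempty := Finset.card_pos.1 (by rw [B.2]; omega)
  set i₀ := B.1.max' hBne with hi₀def
  have hi₀mem : i₀ ∈ B.1 := B.1.max'_mem hBne
  set P : ℝ := t ^ (i₀ : ℕ) with hPdef
  have hP : 0 < P := pow_pos ht0 _
  set i₀a : {x // x ∈ B.1} := ⟨i₀, hi₀mem⟩ with hi₀adef
  set F : {x // x ∈ B.1} → ℝ := fun i =>
    (-1 : ℝ) ^ (m i.1 (B.1.erase i.1)) * (((-1 : ℝ) ^ k * t ^ (i.1 : ℕ)) *
      c ⟨B.1.erase i.1, card_erase B i.1 i.2⟩) with hFdef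
  have hsplit : cSucc c (fun i => (-1 : ℝ) ^ k * t ^ (i : ℕ)) B =
      F i₀a + ∑ i ∈ B.1.attach.erase i₀a, F i := by
    rw [cSucc, Finset.add_sum_erase _ F (Finset.mem_attach _ i₀a)]
  have hterm0 : ε * P ≤ F i₀a := by
    have hm : m i₀ (B.1.erase i₀) = k := by
      rw [hi₀def, m_max' B.1 hBne, B.2]
      rfl
    have hsq : (-1 : ℝ) ^ (m i₀ (B.1.erase i₀)) * (-1 : ℝ) ^ k = 1 := by
      rw [hm, ← pow_add, Even.neg_one_pow ⟨k, rfl⟩]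
    have : F i₀a = P * c ⟨B.1.erase i₀, card_erase B i₀ hi₀mem⟩ := by
      rw [hFdef]
      simp only
      rw [← mul_assoc, ← mul_assoc, hsq, one_mul, hPdef]
    rw [this]
    rw [mul_comm ε P]
    exact mul_le_mul_of_nonneg_left (hεle _) hP.le
  have habs : ∀ i ∈ B.1.attach.erase i₀a, |F i| ≤ P * M / t := by
    intro i hi
    have hne : i.1 ≠ i₀ := by
      intro h
      exact (Finset.ne_of_mem_erase hi) (Subtype.ext h)
    have hlt : i.1 < i₀ := lt_of_le_of_ne (B.1.le_max' i.1 i.2) hne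
    have habs1 : |F i| = t ^ (i.1 : ℕ) * c ⟨B.1.erase i.1, card_erase B i.1 i.2⟩ := by
      rw [hFdef]
      simp only
      rw [abs_mul, abs_mul, abs_mul, abs_pow, abs_pow, abs_neg, abs_one, one_pow,
        one_pow, one_mul, one_mul, abs_of_pos (pow_pos ht0 _), abs_of_pos (hc _)]
    rw [habs1]
    have hpow : t ^ (i.1 : ℕ) * t ≤ P := by
      rw [hPdef, ← pow_succ]
      exact pow_le_pow_right₀ h1t (by exact_mod_cast hlt)
    have h2 : t ^ (i.1 : ℕ) ≤ P / t := (le_div_iff₀ ht0).2 hpow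
    calc t ^ (i.1 : ℕ) * c _ ≤ (P / t) * M :=
          mul_le_mul h2 (hMle _) (hc _).le (div_nonneg hP.le ht0.le)
      _ = P * M / t := by ring
  have hcard : (B.1.attach.erase i₀a).card = k := by
    rw [Finset.card_erase_of_mem (Finset.mem_attach _ _), Finset.card_attach, B.2]
    rfl
  have hsumabs : |∑ i ∈ B.1.attach.erase i₀a, F i| < ε * P := by
    calc |∑ i ∈ B.1.attach.erase i₀a, F i| ≤ ∑ i ∈ B.1.attach.erase i₀a, |F i| :=
          Finset.abs_sum_le_sum_abs _ _
      _ ≤ ∑ _i ∈ B.1.attach.erase i₀a, P * M / t :=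
          Finset.sum_le_sum habs
      _ = k * (P * M / t) := by rw [Finset.sum_const, hcard]; simp [nsmul_eq_mul]
      _ ≤ n * (P * M / t) := by
          apply mul_le_mul_of_nonneg_right _ (div_nonneg (mul_nonneg hP.le hM.le) ht0.le)
          exact_mod_cast hkn.le
      _ < ε * P := by
          have h3 : (n : ℝ) * M * P < ε * t * P := mul_lt_mul_of_pos_right hnMε hP
          have h5 : (n : ℝ) * (P * M / t) = n * M * P / t := by ring
          rw [h5, div_lt_iff₀ ht0]
          nlinarith [h3]
  rw [hsplit]
  have := neg_abs_le (∑ i ∈ B.1.attach.erase i₀a, F i)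
  linarith

end Aux

/-- Lemma 1.2 (second part): a positive, decomposable, normalized element
`ω ∈ Λᵏ(ℝⁿ)` with `k < n` is contained in a positive `(k+1)`-vector,
namely `v ∧ ω` for a suitable vector `v`. -/
theorem pos_contained_in_pos (n k : ℕ) (hkn : k < n)
    (ω : ⋀[ℝ]^k (Fin n → ℝ))
    (hpos : IsPositive ω) (hdec : IsDecomposable ω) (hnorm : IsNormalized ω) :
    ∃ (v : Fin n → ℝ) (η : ⋀[ℝ]^(k+1) (Fin n → ℝ)),
      (η : ExteriorAlgebra ℝ (Fin n → ℝ)) =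
        ι ℝ v * (ω : ExteriorAlgebra ℝ (Fin n → ℝ)) ∧
      IsPositive η := by
  obtain ⟨c, hcoords, hcpos⟩ := hpos
  obtain ⟨v, hv⟩ := Aux.cSucc_pos hkn c hcpos
  obtain ⟨vv, hvv⟩ := hdec
  have hmem : ιMulti ℝ (k + 1) (Fin.cons v vv) ∈ ⋀[ℝ]^(k+1) (Fin n → ℝ) :=
    ExteriorAlgebra.ιMulti_range ℝ (k + 1) (Set.mem_range_self _)
  have h1 : ιMulti ℝ (k + 1) (Fin.cons v vv) =
      ι ℝ v * (ω : ExteriorAlgebra ℝ (Fin n → ℝ)) := by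
    rw [ιMulti_succ_apply]
    congr 1
    rw [hvv]
    congr 1
  refine ⟨v, ⟨ιMulti ℝ (k + 1) (Fin.cons v vv), hmem⟩, h1, ?_⟩
  refine ⟨Aux.cSucc c v, ?_, hv⟩
  show (ιMulti ℝ (k + 1) (Fin.cons v vv) : ExteriorAlgebra ℝ (Fin n → ℝ)) = _
  rw [h1, hcoords]
  exact Aux.expand c v
end
end

section
/- Let l ≥ 1, let HB = { (t,x) ∈ ℝ × ℝ^{l−1} : t ≥ 0, t² + |x|² ≤ 1 } be the closed l-dimensional half ball and HBB = { (0,x) : |x| ≤ 1 } its bottom. Let E and F be topological spaces with subsets EB ⊆ E and FB ⊆ F, and suppose there are homeomorphisms f : E → HB and g : F → HB with f(EB) = HBB and g(FB) = HBB. Let φ : EB → FB be a homeomorphism, and let X be the quotient of the disjoint union E ⊔ F by the identification of each x ∈ EB with φ(x) ∈ FB. Then X is homeomorphic to the closed unit ball in ℝˡ. -/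
open Metric Set

/-- The relation on `E ⊕ F` identifying each point `x` of `EB` with `φ x ∈ FB`. -/
def glueRel {E F : Type*} (EB : Set E) (FB : Set F) (φ : EB → FB) :
    E ⊕ F → E ⊕ F → Prop :=
  fun p q => ∃ x : EB, p = Sum.inl (x : E) ∧ q = Sum.inr ((φ x : FB) : F)


namespace GlueAux


/-- the closed half ball -/
def HBset (k : ℕ) : Set (ℝ × EuclideanSpace ℝ (Fin k)) :=
  {q | 0 ≤ q.1 ∧ q.1 ^ 2 + ‖q.2‖ ^ 2 ≤ 1}

/-- the closed unit disk -/
def Dset (k : ℕ) : Set (EuclideanSpace ℝ (Fin k)) := {w | ‖w‖ ≤ 1}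

variable {k : ℕ}

lemma isCompact_HBset (k : ℕ) : IsCompact (HBset k) := by
  have hcl : IsClosed (HBset k) := by
    apply IsClosed.inter
    · exact isClosed_le continuous_const continuous_fst
    · exact isClosed_le ((continuous_fst.pow 2).add (continuous_snd.norm.pow 2)) continuous_const
  refine Metric.isCompact_of_isClosed_isBounded hcl ?_
  refine (Metric.isBounded_closedBall (x := (0 : ℝ × EuclideanSpace ℝ (Fin k))) (r := 1)).subset ?_
  rintro ⟨t, x⟩ ⟨h0, h1⟩
  have hx : ‖x‖ ≤ 1 := by nlinarith [norm_nonneg x, sq_nonneg t]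
  have ht : |t| ≤ 1 := by
    rw [abs_of_nonneg h0]; nlinarith [norm_nonneg x]
  simp only [Metric.mem_closedBall, dist_zero_right, Prod.norm_def]
  simp only [Real.norm_eq_abs]
  exact max_le ht hx

instance : CompactSpace (HBset k) := isCompact_iff_compactSpace.mp (isCompact_HBset k)

noncomputable def mMap (k : ℕ) (p : ℝ × EuclideanSpace ℝ (Fin k)) :
    EuclideanSpace ℝ (Fin (k + 1)) :=
  (WithLp.equiv 2 (∀ _ : Fin (k+1), ℝ)).symm
    (Fin.cons p.1 ((WithLp.equiv 2 (∀ _ : Fin k, ℝ)) p.2))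

lemma mMap_eq (p : ℝ × EuclideanSpace ℝ (Fin k)) :
    (WithLp.equiv 2 (∀ _ : Fin (k+1), ℝ)) (mMap k p)
      = Fin.cons p.1 ((WithLp.equiv 2 (∀ _ : Fin k, ℝ)) p.2) := rfl

lemma mMap_zero (p : ℝ × EuclideanSpace ℝ (Fin k)) : mMap k p 0 = p.1 := rfl

lemma mMap_succ (p : ℝ × EuclideanSpace ℝ (Fin k)) (i : Fin k) :
    mMap k p i.succ = p.2 i := rfl

lemma norm_mMap_sq (p : ℝ × EuclideanSpace ℝ (Fin k)) :
    ‖mMap k p‖ ^ 2 = p.1 ^ 2 + ‖p.2‖ ^ 2 := by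
  have h1 : ‖mMap k p‖ = Real.sqrt (∑ i, ‖mMap k p i‖ ^ 2) := EuclideanSpace.norm_eq _
  have h2 : ‖p.2‖ = Real.sqrt (∑ i, ‖p.2 i‖ ^ 2) := EuclideanSpace.norm_eq _
  rw [h1, h2, Real.sq_sqrt (by positivity), Real.sq_sqrt (by positivity),
    Fin.sum_univ_succ]
  simp [mMap_zero, mMap_succ, Real.norm_eq_abs, sq_abs]

lemma mMap_injective : Function.Injective (mMap k) := by
  intro p q h
  have h0 := congrArg (fun v => v 0) h
  have hs : ∀ i : Fin k, p.2 i = q.2 i := fun i => congrArg (fun v => v i.succ) h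
  have : p.2 = q.2 := PiLp.ext hs
  exact Prod.ext (by simpa [mMap_zero] using h0) this

lemma mMap_continuous : Continuous (mMap k) := by
  refine (PiLp.continuous_toLp 2 (fun _ : Fin (k+1) => ℝ)).comp ?_
  refine continuous_pi fun i => ?_
  refine Fin.cases ?_ ?_ i
  · simpa using continuous_fst
  · intro j
    simpa [Function.comp_def] using (continuous_apply j).comp
      ((PiLp.continuous_ofLp 2 (fun _ : Fin k => ℝ)).comp continuous_snd)

lemma mMap_cons_tail (v : EuclideanSpace ℝ (Fin (k+1))) :
    mMap k (v 0, (WithLp.equiv 2 (∀ _ : Fin k, ℝ)).symm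
      (Fin.tail ((WithLp.equiv 2 (∀ _ : Fin (k+1), ℝ)) v))) = v := by
  unfold mMap
  rw [Equiv.apply_symm_apply,
    show (v 0 : ℝ) = ((WithLp.equiv 2 (∀ _ : Fin (k+1), ℝ)) v) 0 from rfl,
    Fin.cons_self_tail, Equiv.symm_apply_apply]



noncomputable def sF (t : ℝ) : ℝ := Real.sqrt (1 - t ^ 2)
lemma sF_nonneg (t : ℝ) : 0 ≤ sF t := Real.sqrt_nonneg _
lemma sF_sq {t : ℝ} (h : t ^ 2 ≤ 1) : sF t ^ 2 = 1 - t ^ 2 := Real.sq_sqrt (by linarith)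
lemma sF_continuous : Continuous sF :=
  Real.continuous_sqrt.comp (continuous_const.sub (continuous_pow 2))

lemma HB_t_sq_le (z : HBset k) : (z.1.1) ^ 2 ≤ 1 := by
  have h := z.2.2
  nlinarith [norm_nonneg z.1.2]

lemma norm_le_sF (z : HBset k) :
    ‖z.1.2‖ ≤ sF z.1.1 := by
  have h := z.2.2
  have h2 : ‖z.1.2‖ ^ 2 ≤ 1 - z.1.1 ^ 2 := by linarith
  calc ‖z.1.2‖
      = Real.sqrt (‖z.1.2‖ ^ 2) :=
        (Real.sqrt_sq (norm_nonneg _)).symm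
    _ ≤ sF z.1.1 := Real.sqrt_le_sqrt h2

lemma mem_Dset_inner (z : HBset k) :
    (sF z.1.1)⁻¹ • z.1.2 ∈ Dset k := by
  have hsn : 0 ≤ sF z.1.1 := sF_nonneg _
  rcases eq_or_lt_of_le hsn with h0 | hpos
  · simp [Dset, ← h0]
  · have h := norm_le_sF z
    simp only [Dset, mem_setOf_eq, norm_smul, Real.norm_eq_abs,
      abs_of_nonneg (inv_nonneg.mpr hsn)]
    rw [inv_mul_le_iff₀ hpos, mul_one]
    exact h

/-- extension of a disk self-map to the half ball, preserving height. -/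
noncomputable def psiExt (ψ : Dset k → Dset k) (z : HBset k) : HBset k :=
  ⟨(z.1.1, sF z.1.1 • (ψ ⟨_, mem_Dset_inner z⟩ : EuclideanSpace ℝ (Fin k))), by
    constructor
    · exact z.2.1
    · have hψ : ‖(ψ ⟨_, mem_Dset_inner z⟩ : EuclideanSpace ℝ (Fin k))‖ ≤ 1 := (ψ _).2
      have hs : 0 ≤ sF z.1.1 := sF_nonneg _
      have h1 : ‖sF z.1.1 • (ψ ⟨_, mem_Dset_inner z⟩ : EuclideanSpace ℝ (Fin k))‖
          ≤ sF z.1.1 := by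
        rw [norm_smul, Real.norm_eq_abs, abs_of_nonneg hs]
        nlinarith
      have h2 : sF z.1.1 ^ 2 = 1 - z.1.1 ^ 2 := sF_sq (HB_t_sq_le z)
      nlinarith [norm_nonneg
        (sF z.1.1 • (ψ ⟨_, mem_Dset_inner z⟩ : EuclideanSpace ℝ (Fin k)))]⟩

lemma psiExt_fst (ψ : Dset k → Dset k) (z : HBset k) :
    ((psiExt ψ z).1).1 = z.1.1 := rfl

lemma psiExt_comp (ψ ψ' : Dset k → Dset k) (h : ∀ w, ψ' (ψ w) = w) (z : HBset k) :
    psiExt ψ' (psiExt ψ z) = z := by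
  apply Subtype.ext
  apply Prod.ext
  · rfl
  · set t := z.1.1 with ht
    set x := z.1.2 with hx
    show sF t • (ψ' ⟨(sF t)⁻¹ • (sF t •
        (ψ ⟨(sF t)⁻¹ • x, mem_Dset_inner z⟩ : EuclideanSpace ℝ (Fin k))),
        mem_Dset_inner (psiExt ψ z)⟩ : EuclideanSpace ℝ (Fin k)) = x
    by_cases hs : sF t = 0
    · have hx0 : x = 0 := by
        have hle := norm_le_sF z
        rw [← ht, ← hx, hs] at hle
        exact norm_le_zero_iff.mp hle
      have hz : ∀ c : EuclideanSpace ℝ (Fin k), sF t • c = 0 := fun c => by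
        rw [hs, zero_smul]
      rw [hz, hx0]
    · have key : (⟨(sF t)⁻¹ • (sF t •
          (ψ ⟨(sF t)⁻¹ • x, mem_Dset_inner z⟩ : EuclideanSpace ℝ (Fin k))),
          mem_Dset_inner (psiExt ψ z)⟩ : Dset k) = ψ ⟨(sF t)⁻¹ • x, mem_Dset_inner z⟩ := by
        apply Subtype.ext
        show (sF t)⁻¹ • (sF t •
          (ψ ⟨(sF t)⁻¹ • x, mem_Dset_inner z⟩ : EuclideanSpace ℝ (Fin k))) = _
        rw [smul_smul, inv_mul_cancel₀ hs, one_smul]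
      rw [key, h]
      show sF t • ((sF t)⁻¹ • x) = x
      rw [smul_smul, mul_inv_cancel₀ hs, one_smul]

lemma mem_Dset_of_bottom (z : HBset k) (h0 : z.1.1 = 0) :
    z.1.2 ∈ Dset k := by
  have h := z.2.2
  rw [h0] at h
  show ‖z.1.2‖ ≤ 1
  nlinarith [norm_nonneg z.1.2]

lemma psiExt_bottom (ψ : Dset k → Dset k) (z : HBset k) (h0 : z.1.1 = 0) :
    (psiExt ψ z).1
      = (0, (ψ ⟨z.1.2, mem_Dset_of_bottom z h0⟩ : EuclideanSpace ℝ (Fin k))) := by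
  apply Prod.ext
  · exact h0
  · show sF z.1.1 • (ψ ⟨_, mem_Dset_inner z⟩ : EuclideanSpace ℝ (Fin k)) = _
    have hs : sF z.1.1 = 1 := by rw [h0]; simp [sF]
    have key : (⟨(sF z.1.1)⁻¹ • z.1.2,
        mem_Dset_inner z⟩ : Dset k) = ⟨z.1.2, mem_Dset_of_bottom z h0⟩ := by
      apply Subtype.ext
      show (sF z.1.1)⁻¹ • z.1.2 = z.1.2
      rw [hs, inv_one, one_smul]
    rw [key, hs, one_smul]

lemma psiExt_continuous (ψ : Dset k → Dset k) (hψ : Continuous ψ) :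
    Continuous (psiExt ψ) := by
  apply Continuous.subtype_mk
  apply Continuous.prodMk
  · exact continuous_fst.comp continuous_subtype_val
  · rw [continuous_iff_continuousAt]
    intro z0
    by_cases hs : sF z0.1.1 = 0
    · have hz0 : ∀ c : EuclideanSpace ℝ (Fin k), sF z0.1.1 • c = 0 := fun c => by
        rw [hs, zero_smul]
      have hg : Filter.Tendsto (fun z : HBset k => sF z.1.1) (nhds z0) (nhds 0) := by
        have hc : Continuous fun z : HBset k => sF z.1.1 :=
          sF_continuous.comp (continuous_fst.comp continuous_subtype_val)
        simpa [ContinuousAt, hs] using hc.continuousAt (x := z0)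
      have ht : Filter.Tendsto (fun z : HBset k => sF z.1.1 •
          (ψ ⟨_, mem_Dset_inner z⟩ : EuclideanSpace ℝ (Fin k))) (nhds z0) (nhds 0) := by
        refine squeeze_zero_norm (fun z => ?_) hg
        rw [norm_smul, Real.norm_eq_abs, abs_of_nonneg (sF_nonneg _)]
        have hb : ‖(ψ (⟨_, mem_Dset_inner z⟩ : Dset k) : EuclideanSpace ℝ (Fin k))‖ ≤ 1 :=
          (ψ _).2
        nlinarith [sF_nonneg z.1.1,
          norm_nonneg (ψ (⟨_, mem_Dset_inner z⟩ : Dset k) : EuclideanSpace ℝ (Fin k))]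
      have hval : (fun z : HBset k => sF z.1.1 •
          (ψ ⟨_, mem_Dset_inner z⟩ : EuclideanSpace ℝ (Fin k))) z0 = 0 := hz0 _
      unfold ContinuousAt
      rw [hval]
      exact ht
    · have hct : ContinuousAt (fun z : HBset k => sF z.1.1) z0 :=
        (sF_continuous.comp (continuous_fst.comp continuous_subtype_val)).continuousAt
      have hinner : ContinuousAt
          (fun z : HBset k => (⟨(sF z.1.1)⁻¹ •
            z.1.2, mem_Dset_inner z⟩ : Dset k)) z0 := by
        exact ContinuousAt.codRestrict (fun z => mem_Dset_inner z)
          ((hct.inv₀ hs).smul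
            ((continuous_snd.comp continuous_subtype_val).continuousAt))
      have h2 : ContinuousAt (fun z : HBset k =>
          (ψ ⟨(sF z.1.1)⁻¹ • z.1.2, mem_Dset_inner z⟩ : EuclideanSpace ℝ (Fin k))) z0 :=
        continuous_subtype_val.continuousAt.comp (hψ.continuousAt.comp hinner)
      exact hct.smul h2

lemma exists_bottomHomeo {E : Type} [TopologicalSpace E] (EB : Set E)
    (f : E ≃ₜ HBset k)
    (hf : ∀ x : E, ((f x).1.1 = 0 ∧ ‖(f x).1.2‖ ≤ 1) ↔ x ∈ EB) :
    ∃ β : EB ≃ₜ Dset k, ∀ x : EB, (β x : EuclideanSpace ℝ (Fin k)) = (f ↑x).1.2 := by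
  haveI : CompactSpace E := f.symm.compactSpace
  haveI : T2Space E := f.symm.t2Space
  have hEBc : IsClosed EB := by
    have : EB = (fun x : E => (f x).1) ⁻¹' {q | q.1 = 0 ∧ ‖q.2‖ ≤ 1} := by
      ext x
      simp only [mem_preimage, mem_setOf_eq]
      exact (hf x).symm
    rw [this]
    refine IsClosed.preimage (continuous_subtype_val.comp f.continuous) ?_
    exact (isClosed_eq continuous_fst continuous_const).inter
      (isClosed_le continuous_snd.norm continuous_const)
  haveI : CompactSpace EB := isCompact_iff_compactSpace.mp hEBc.isCompact
  let e : EB ≃ Dset k :=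
    { toFun := fun x => ⟨(f ↑x).1.2, ((hf ↑x).mpr x.2).2⟩
      invFun := fun w => ⟨f.symm ⟨(0, ↑w), by
        refine ⟨le_refl 0, ?_⟩
        have := w.2
        show (0:ℝ) ^ 2 + ‖(w : EuclideanSpace ℝ (Fin k))‖ ^ 2 ≤ 1
        have hw : ‖(w : EuclideanSpace ℝ (Fin k))‖ ≤ 1 := w.2
        nlinarith [norm_nonneg (w : EuclideanSpace ℝ (Fin k))]⟩, by
        apply (hf _).mp
        rw [f.apply_symm_apply]
        exact ⟨rfl, w.2⟩⟩
      left_inv := by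
        intro x
        apply Subtype.ext
        apply f.injective
        rw [f.apply_symm_apply]
        apply Subtype.ext
        apply Prod.ext
        · exact (((hf ↑x).mpr x.2).1).symm
        · rfl
      right_inv := by
        intro w
        apply Subtype.ext
        show (f (f.symm _)).1.2 = _
        rw [f.apply_symm_apply] }
  have hc : Continuous e := by
    apply Continuous.subtype_mk
    exact continuous_snd.comp
      (continuous_subtype_val.comp (f.continuous.comp continuous_subtype_val))
  exact ⟨hc.homeoOfEquivCompactToT2, fun x => rfl⟩


lemma norm_mMap_le {k : ℕ} (q : ℝ × EuclideanSpace ℝ (Fin k))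
    (h : q.1 ^ 2 + ‖q.2‖ ^ 2 ≤ 1) : ‖mMap k q‖ ≤ 1 := by
  nlinarith [norm_mMap_sq q, norm_nonneg (mMap k q)]

theorem glue_aux (k : ℕ) {E F : Type} [TopologicalSpace E] [TopologicalSpace F]
    (EB : Set E) (FB : Set F)
    (f : E ≃ₜ HBset k)
    (hf : ∀ x : E, ((f x).1.1 = 0 ∧ ‖(f x).1.2‖ ≤ 1) ↔ x ∈ EB)
    (g : F ≃ₜ HBset k)
    (hg : ∀ y : F, ((g y).1.1 = 0 ∧ ‖(g y).1.2‖ ≤ 1) ↔ y ∈ FB)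
    (φ : EB ≃ₜ FB) :
    Nonempty (Quot (glueRel EB FB φ) ≃ₜ
      (Metric.closedBall (0 : EuclideanSpace ℝ (Fin (k + 1))) 1 :
        Set (EuclideanSpace ℝ (Fin (k + 1))))) := by
  haveI : CompactSpace E := f.symm.compactSpace
  haveI : CompactSpace F := g.symm.compactSpace
  obtain ⟨β, hβ⟩ := exists_bottomHomeo EB f hf
  obtain ⟨γ, hγ⟩ := exists_bottomHomeo FB g hg
  set ψh : Dset k ≃ₜ Dset k := γ.symm.trans (φ.symm.trans β) with hψh
  have hΨli : ∀ z, psiExt ψh.symm (psiExt ψh z) = z :=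
    psiExt_comp _ _ (fun w => ψh.symm_apply_apply w)
  have hΨri : ∀ z, psiExt ψh (psiExt ψh.symm z) = z :=
    psiExt_comp _ _ (fun w => ψh.apply_symm_apply w)
  set H : E ⊕ F → EuclideanSpace ℝ (Fin (k + 1)) :=
    Sum.elim (fun x => mMap k (f x).1)
      (fun y => mMap k (-(psiExt ψh (g y)).1.1, (psiExt ψh (g y)).1.2)) with hH
  have Hmem : ∀ p, H p ∈ Metric.closedBall (0 : EuclideanSpace ℝ (Fin (k + 1))) 1 := by
    rintro (x | y) <;> rw [Metric.mem_closedBall, dist_zero_right]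
    · exact norm_mMap_le _ (f x).2.2
    · refine norm_mMap_le _ ?_
      have h := (psiExt ψh (g y)).2.2
      show (-(psiExt ψh (g y)).1.1) ^ 2 + ‖(psiExt ψh (g y)).1.2‖ ^ 2 ≤ 1
      rw [neg_sq]
      exact h
  have Hresp : ∀ a b, glueRel EB FB φ a b → H a = H b := by
    rintro _ _ ⟨x, rfl, rfl⟩
    show mMap k (f ↑x).1
      = mMap k (-(psiExt ψh (g ↑(φ x))).1.1, (psiExt ψh (g ↑(φ x))).1.2)
    have h0 : (g ↑(φ x)).1.1 = 0 := ((hg _).mpr (φ x).2).1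
    have hb := psiExt_bottom ψh (g ↑(φ x)) h0
    have hb1 : (psiExt ψh (g ↑(φ x))).1.1 = 0 := by rw [hb]
    have hb2 : (psiExt ψh (g ↑(φ x))).1.2
        = (ψh ⟨(g ↑(φ x)).1.2, mem_Dset_of_bottom _ h0⟩ : EuclideanSpace ℝ (Fin k)) := by
      rw [hb]
    have hDs : (⟨(g ↑(φ x)).1.2, mem_Dset_of_bottom _ h0⟩ : Dset k) = γ (φ x) :=
      Subtype.ext (hγ (φ x)).symm
    have h4 : (ψh (γ (φ x)) : EuclideanSpace ℝ (Fin k)) = (β x : EuclideanSpace ℝ (Fin k)) := by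
      simp [hψh, Homeomorph.trans_apply]
    apply congrArg
    apply Prod.ext
    · rw [hb1, neg_zero]
      exact ((hf ↑x).mpr x.2).1
    · rw [hb2, hDs, h4]
      exact (hβ x).symm
  set Heq : E ⊕ F → (Metric.closedBall (0 : EuclideanSpace ℝ (Fin (k + 1))) 1 :
      Set (EuclideanSpace ℝ (Fin (k + 1)))) := fun p => ⟨H p, Hmem p⟩ with hHeq
  set L : Quot (glueRel EB FB φ) → (Metric.closedBall (0 : EuclideanSpace ℝ (Fin (k + 1))) 1 :
      Set (EuclideanSpace ℝ (Fin (k + 1)))) :=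
    Quot.lift Heq (fun a b h => Subtype.ext (Hresp a b h)) with hL
  -- mixed-case injectivity helper
  have mixed : ∀ (x : E) (y : F), H (Sum.inl x) = H (Sum.inr y) →
      Quot.mk (glueRel EB FB φ) (Sum.inl x) = Quot.mk (glueRel EB FB φ) (Sum.inr y) := by
    intro x y h
    have h' : (f x).1 = (-(psiExt ψh (g y)).1.1, (psiExt ψh (g y)).1.2) := mMap_injective h
    have h1 : (f x).1.1 = -(psiExt ψh (g y)).1.1 := by
      simpa using congrArg Prod.fst h'
    rw [psiExt_fst] at h1
    have hfx0 : (f x).1.1 = 0 := le_antisymm (by linarith [(g y).2.1]) (f x).2.1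
    have hgy0 : (g y).1.1 = 0 := by linarith [(f x).2.1, (g y).2.1]
    have hxEB : x ∈ EB := by
      refine (hf x).mp ⟨hfx0, ?_⟩
      have h2 := (f x).2.2
      rw [hfx0] at h2
      nlinarith [norm_nonneg (f x).1.2]
    have hyFB : y ∈ FB := by
      refine (hg y).mp ⟨hgy0, ?_⟩
      have h2 := (g y).2.2
      rw [hgy0] at h2
      nlinarith [norm_nonneg (g y).1.2]
    have h2 : (f x).1.2 = (psiExt ψh (g y)).1.2 := by
      simpa using congrArg Prod.snd h'
    have h3 : (psiExt ψh (g y)).1.2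
        = (ψh ⟨(g y).1.2, mem_Dset_of_bottom _ hgy0⟩ : EuclideanSpace ℝ (Fin k)) := by
      rw [psiExt_bottom ψh (g y) hgy0]
    have hDs : (⟨(g y).1.2, mem_Dset_of_bottom _ hgy0⟩ : Dset k) = γ ⟨y, hyFB⟩ :=
      Subtype.ext (hγ ⟨y, hyFB⟩).symm
    have h4 : (ψh (γ ⟨y, hyFB⟩) : EuclideanSpace ℝ (Fin k))
        = (β (φ.symm ⟨y, hyFB⟩) : EuclideanSpace ℝ (Fin k)) := by
      simp [hψh, Homeomorph.trans_apply]
    have h5 : (f x).1 = (f ↑(φ.symm ⟨y, hyFB⟩)).1 := by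
      apply Prod.ext
      · rw [hfx0, (((hf ↑(φ.symm ⟨y, hyFB⟩)).mpr (φ.symm ⟨y, hyFB⟩).2).1)]
      · rw [h2, h3, hDs, h4, hβ]
    have h6 : x = ↑(φ.symm ⟨y, hyFB⟩) := f.injective (Subtype.ext h5)
    refine Quot.sound ⟨φ.symm ⟨y, hyFB⟩, ?_, ?_⟩
    · rw [h6]
    · rw [Homeomorph.apply_symm_apply]
  have key : ∀ a b : E ⊕ F, H a = H b →
      Quot.mk (glueRel EB FB φ) a = Quot.mk (glueRel EB FB φ) b := by
    rintro (x | y) (x' | y') h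
    · have h' : (f x).1 = (f x').1 := mMap_injective h
      rw [f.injective (Subtype.ext h')]
    · exact mixed x y' h
    · exact (mixed x' y h.symm).symm
    · have h' : (-(psiExt ψh (g y)).1.1, (psiExt ψh (g y)).1.2)
          = (-(psiExt ψh (g y')).1.1, (psiExt ψh (g y')).1.2) := mMap_injective h
      have h1 : (psiExt ψh (g y)).1.1 = (psiExt ψh (g y')).1.1 :=
        neg_injective (by simpa using congrArg Prod.fst h')
      have h2 : (psiExt ψh (g y)).1 = (psiExt ψh (g y')).1 :=
        Prod.ext h1 (by simpa using congrArg Prod.snd h')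
      have h3 : g y = g y' := by
        have := congrArg (psiExt ψh.symm) (Subtype.ext h2)
        rwa [hΨli, hΨli] at this
      rw [g.injective h3]
  have hinj : Function.Injective L := by
    intro qa qb h
    obtain ⟨a, rfl⟩ := Quot.exists_rep qa
    obtain ⟨b, rfl⟩ := Quot.exists_rep qb
    apply key a b
    rw [hL] at h
    have h2 : Heq a = Heq b := h
    rw [hHeq] at h2
    exact congrArg Subtype.val h2
  have hsurj : Function.Surjective L := by
    rintro ⟨p, hp'⟩
    have hp : ‖p‖ ≤ 1 := by rwa [Metric.mem_closedBall, dist_zero_right] at hp'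
    set tl : EuclideanSpace ℝ (Fin k) := (WithLp.equiv 2 (∀ _ : Fin k, ℝ)).symm
      (Fin.tail ((WithLp.equiv 2 (∀ _ : Fin (k + 1), ℝ)) p)) with htl
    have hpx : mMap k (p 0, tl) = p := mMap_cons_tail p
    have hsum : (p 0) ^ 2 + ‖tl‖ ^ 2 ≤ 1 := by
      have hn := norm_mMap_sq (p 0, tl)
      rw [hpx] at hn
      simp only at hn
      nlinarith [hp, norm_nonneg p]
    rcases le_total 0 (p 0) with hT | hT
    · have hmq : (p 0, tl) ∈ HBset k := ⟨hT, by simpa using hsum⟩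
      refine ⟨Quot.mk _ (Sum.inl (f.symm ⟨(p 0, tl), hmq⟩)), ?_⟩
      rw [hL]
      have : Heq (Sum.inl (f.symm ⟨(p 0, tl), hmq⟩)) = ⟨p, hp'⟩ := by
        rw [hHeq]
        apply Subtype.ext
        show H (Sum.inl (f.symm ⟨(p 0, tl), hmq⟩)) = p
        rw [hH]
        show mMap k (f (f.symm ⟨(p 0, tl), hmq⟩)).1 = p
        rw [Homeomorph.apply_symm_apply]
        exact hpx
      exact this
    · have hq : (-(p 0), tl) ∈ HBset k := by
        constructor
        · show (0:ℝ) ≤ -(p 0)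
          linarith
        · show (-(p 0)) ^ 2 + ‖tl‖ ^ 2 ≤ 1
          rw [neg_sq]
          exact hsum
      refine ⟨Quot.mk _ (Sum.inr (g.symm (psiExt ψh.symm ⟨(-(p 0), tl), hq⟩))), ?_⟩
      rw [hL]
      have : Heq (Sum.inr (g.symm (psiExt ψh.symm ⟨(-(p 0), tl), hq⟩))) = ⟨p, hp'⟩ := by
        rw [hHeq]
        apply Subtype.ext
        show H (Sum.inr (g.symm (psiExt ψh.symm ⟨(-(p 0), tl), hq⟩))) = p
        rw [hH]
        show mMap k (-(psiExt ψh (g (g.symm (psiExt ψh.symm ⟨(-(p 0), tl), hq⟩)))).1.1,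
          (psiExt ψh (g (g.symm (psiExt ψh.symm ⟨(-(p 0), tl), hq⟩)))).1.2) = p
        rw [Homeomorph.apply_symm_apply, hΨri]
        show mMap k (-(-(p 0)), tl) = p
        rw [neg_neg]
        exact hpx
      exact this
  have hLc : Continuous L := by
    rw [hL]
    apply continuous_quot_lift
    rw [hHeq]
    apply Continuous.subtype_mk
    rw [hH]
    apply Continuous.sumElim
    · exact mMap_continuous.comp (continuous_subtype_val.comp f.continuous)
    · have c0 : Continuous (fun y : F => (psiExt ψh (g y) : ℝ × EuclideanSpace ℝ (Fin k))) :=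
        continuous_subtype_val.comp ((psiExt_continuous _ ψh.continuous).comp g.continuous)
      exact mMap_continuous.comp
        (((continuous_fst.comp c0).neg).prodMk (continuous_snd.comp c0))
  exact ⟨Continuous.homeoOfEquivCompactToT2 (f := Equiv.ofBijective L ⟨hinj, hsurj⟩) hLc⟩

end GlueAux

/-- Corollary 2.2: gluing two `l`-convexoids (spaces homeomorphic to the closed
`l`-dimensional half ball, with bottoms corresponding to the flat face) along a
homeomorphism of their bottoms yields a space homeomorphic to the closed `l`-ball. -/
theorem glue_convexoids_ball (l : ℕ) (hl : 1 ≤ l)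
    {E F : Type} [TopologicalSpace E] [TopologicalSpace F]
    (EB : Set E) (FB : Set F)
    (HB : Set (ℝ × EuclideanSpace ℝ (Fin (l - 1))))
    (hHB : HB = {q | 0 ≤ q.1 ∧ q.1 ^ 2 + ‖q.2‖ ^ 2 ≤ 1})
    (HBB : Set (ℝ × EuclideanSpace ℝ (Fin (l - 1))))
    (hHBB : HBB = {q | q.1 = 0 ∧ ‖q.2‖ ≤ 1})
    (f : E ≃ₜ HB) (hf : ∀ x : E, (f x : ℝ × EuclideanSpace ℝ (Fin (l - 1))) ∈ HBB ↔ x ∈ EB)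
    (g : F ≃ₜ HB) (hg : ∀ y : F, (g y : ℝ × EuclideanSpace ℝ (Fin (l - 1))) ∈ HBB ↔ y ∈ FB)
    (φ : EB ≃ₜ FB) :
    Nonempty (Quot (glueRel EB FB φ) ≃ₜ
      (Metric.closedBall (0 : EuclideanSpace ℝ (Fin l)) 1 : Set (EuclideanSpace ℝ (Fin l)))) := by
  subst hHB hHBB
  obtain ⟨k, rfl⟩ : ∃ k, l = k + 1 := ⟨l - 1, (Nat.succ_pred_eq_of_pos hl).symm⟩
  exact GlueAux.glue_aux k EB FB f (fun x => hf x) g (fun y => hg y) φ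
end

section
/- Let 1 ≤ k ≤ n, let t ∈ [0,1], let η be a nonnegative, normalized, decomposable element of Λᵏ⁻¹(ℝⁿ) lying in the subalgebra generated by e₂,…,eₙ, and let ω be a nonnegative, normalized, decomposable element of Λᵏ(ℝⁿ) lying in the subalgebra generated by e₂,…,eₙ such that ω = v ∧ η for some v ∈ ℝⁿ. Then ρ = t·(e₁ ∧ η) + (1−t)·ω is a nonnegative, normalized, decomposable element of Λᵏ(ℝⁿ). -/
open ExteriorAlgebra

noncomputable section

section Aux
variable {n : ℕ}

lemma wedge_list (n : ℕ) (l : List (Fin n)) :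
    ((l.map fun i => ι ℝ (Pi.single i (1:ℝ))).prod : ExteriorAlgebra ℝ (Fin n → ℝ)) =
      ιMulti ℝ l.length (fun j => Pi.single (l.get j) (1:ℝ)) := by
  rw [ιMulti_apply]
  congr 1
  conv_lhs => rw [← List.ofFn_get l, List.map_ofFn]
  rfl

lemma eWedge_eq (n : ℕ) (A : Finset (Fin n)) :
    eWedge n A = ιMulti ℝ (A.sort (· ≤ ·)).length
      (fun j => Pi.single ((A.sort (· ≤ ·)).get j) (1:ℝ)) :=
  wedge_list n _

/-- The coordinate functional extracting the `e_B`-coefficient (within a fixed degree). -/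
def coordFn (n : ℕ) (d : Fin n) (B : Finset (Fin n)) :
    ExteriorAlgebra ℝ (Fin n → ℝ) →ₗ[ℝ] ℝ :=
  ExteriorAlgebra.liftAlternating fun i =>
    (Matrix.detRowAlternating).compLinearMap
      (LinearMap.funLeft ℝ ℝ fun j : Fin i => (B.sort (· ≤ ·)).getD j d)

lemma coordFn_eWedge (n : ℕ) (d : Fin n) (A B : Finset (Fin n)) (hcard : A.card = B.card) :
    coordFn n d B (eWedge n A) = if A = B then 1 else 0 := by
  rw [eWedge_eq, coordFn, liftAlternating_apply_ιMulti, AlternatingMap.compLinearMap_apply]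
  set la := A.sort (· ≤ ·) with hla
  set lb := B.sort (· ≤ ·) with hlb
  have hlen : la.length = lb.length := by
    rw [hla, hlb, Finset.length_sort, Finset.length_sort, hcard]
  set M : Matrix (Fin la.length) (Fin la.length) ℝ :=
    fun j => LinearMap.funLeft ℝ ℝ (fun l : Fin la.length => lb.getD l d)
      (Pi.single (la.get j) (1:ℝ)) with hM
  have hMe : ∀ j l, M j l = (Pi.single (la.get j) (1:ℝ) : Fin n → ℝ) (lb.getD (l:ℕ) d) :=
    fun j l => rfl
  show M.det = _
  by_cases hAB : A = B
  · subst hAB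
    rw [if_pos rfl]
    have : M = 1 := by
      ext j l
      rw [hMe, Matrix.one_apply]
      have hl : (l : ℕ) < la.length := l.2
      rw [List.getD_eq_getElem la d hl]
      rw [Pi.single_apply]
      have : la[(l:ℕ)] = la.get j ↔ l = j := by
        rw [show la.get j = la[(j:ℕ)] from rfl, (Finset.sort_nodup (s := A) (r := fun x1 x2 => x1 ≤ x2)).getElem_inj_iff]
        exact ⟨fun h => Fin.ext h, fun h => by rw [h]⟩
      simp only [this]
      by_cases h : j = l
      · simp [h]
      · rw [if_neg (fun hh => h hh.symm), if_neg h]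
    rw [this, Matrix.det_one]
  · rw [if_neg hAB]
    have hns : ¬ B ⊆ A := fun hsub =>
      hAB (Finset.eq_of_subset_of_card_le hsub (le_of_eq hcard)).symm
    obtain ⟨b, hbB, hbA⟩ := Finset.not_subset.mp hns
    have hbl : b ∈ lb := (Finset.mem_sort _).mpr hbB
    obtain ⟨l₀, hl₀⟩ := List.mem_iff_get.mp hbl
    apply Matrix.det_eq_zero_of_column_eq_zero (Fin.cast hlen.symm l₀)
    intro j
    rw [hMe]
    have hcl : ((Fin.cast hlen.symm l₀ : Fin la.length) : ℕ) < lb.length := by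
      simp [l₀.2]
    rw [List.getD_eq_getElem lb d hcl]
    have : lb[((Fin.cast hlen.symm l₀ : Fin la.length) : ℕ)] = b := by
      simpa [List.get] using hl₀
    rw [this]
    apply Pi.single_eq_of_ne
    intro h
    exact hbA (h ▸ (Finset.mem_sort _).mp (la.get_mem j))

lemma coordFn_sum {n k : ℕ} (d : Fin n) (c : {A : Finset (Fin n) // A.card = k} → ℝ)
    (B : {A : Finset (Fin n) // A.card = k}) :
    coordFn n d B.1 (∑ A : {A : Finset (Fin n) // A.card = k}, c A • eWedge n A.1) = c B := by
  rw [map_sum]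
  rw [Finset.sum_eq_single B]
  · rw [map_smul, coordFn_eWedge n d B.1 B.1 rfl, if_pos rfl, smul_eq_mul, mul_one]
  · intro A _ hA
    rw [map_smul, coordFn_eWedge n d A.1 B.1 (A.2.trans B.2.symm),
      if_neg (fun h => hA (Subtype.ext h)), smul_eq_mul, mul_zero]
  · intro h; exact absurd (Finset.mem_univ B) h

lemma hasCoords_unique_s11 {n k : ℕ} (hn : 0 < n) {ω : ⋀[ℝ]^k (Fin n → ℝ)}
    {c c' : {A : Finset (Fin n) // A.card = k} → ℝ}
    (h : HasCoords ω c) (h' : HasCoords ω c') : c = c' := by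
  funext B
  have := congrArg (coordFn n ⟨0, hn⟩ B.1)
    ((h.symm.trans h' : (_ : ExteriorAlgebra ℝ (Fin n → ℝ)) = _))
  rwa [coordFn_sum, coordFn_sum] at this

lemma wedge_insert {n : ℕ} {z : Fin n} {A : Finset (Fin n)} (hz : ∀ b ∈ A, z ≤ b)
    (hzA : z ∉ A) :
    ι ℝ ((Pi.single z 1 : Fin n → ℝ)) * eWedge n A = eWedge n (insert z A) := by
  unfold eWedge
  rw [Finset.sort_insert _ hz hzA, List.map_cons, List.prod_cons]

lemma sum_bij_insert {n : ℕ} {E : Type*} [AddCommMonoid E] (z : Fin n) (m : ℕ)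
    (f : {A : Finset (Fin n) // A.card = m} → E) (g : {B : Finset (Fin n) // B.card = m + 1} → E)
    (hf : ∀ A, z ∈ A.1 → f A = 0) (hg : ∀ B, z ∉ B.1 → g B = 0)
    (hfg : ∀ (A : {A : Finset (Fin n) // A.card = m}) (hA : z ∉ A.1),
      f A = g ⟨insert z A.1, by rw [Finset.card_insert_of_notMem hA, A.2]⟩) :
    ∑ A, f A = ∑ B, g B := by
  classical
  rw [← Finset.sum_filter_add_sum_filter_not Finset.univ (fun A => z ∈ A.1) f,
      ← Finset.sum_filter_add_sum_filter_not Finset.univ (fun B => z ∈ B.1) g]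
  rw [Finset.sum_eq_zero (fun A hA => hf A (Finset.mem_filter.mp hA).2),
      Finset.sum_eq_zero (fun B hB => hg B (Finset.mem_filter.mp hB).2), zero_add, add_zero]
  refine Finset.sum_bij'
    (i := fun A hA => ⟨insert z A.1, by
      rw [Finset.card_insert_of_notMem (Finset.mem_filter.mp hA).2, A.2]⟩)
    (j := fun B hB => ⟨B.1.erase z, by
      rw [Finset.card_erase_of_mem (Finset.mem_filter.mp hB).2, B.2]; rfl⟩)
    ?_ ?_ ?_ ?_ ?_
  · intro A hA
    simp
  · intro B hB
    simp
  · intro A hA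
    apply Subtype.ext
    exact Finset.erase_insert (Finset.mem_filter.mp hA).2
  · intro B hB
    apply Subtype.ext
    exact Finset.insert_erase (Finset.mem_filter.mp hB).2
  · intro A hA
    exact hfg A (Finset.mem_filter.mp hA).2

end Aux

/-- Reconstruction step: if `η ∈ Λᵏ⁻¹(ℝⁿ)` and `ω ∈ Λᵏ(ℝⁿ)` are nonnegative, normalized,
decomposable elements lying in the subalgebra generated by `e₂,…,eₙ`, with `ω = v ∧ η`
for some vector `v`, then for `t ∈ [0,1]` the element `ρ = t·(e₁ ∧ η) + (1-t)·ω` is a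
nonnegative, normalized, decomposable element of `Λᵏ(ℝⁿ)`. -/
theorem reconstruction (n k : ℕ) (hk : 1 ≤ k) (hkn : k ≤ n)
    (t : ℝ) (ht0 : 0 ≤ t) (ht1 : t ≤ 1)
    (η : ⋀[ℝ]^(k-1) (Fin n → ℝ))
    (hηnn : IsNonneg η) (hηnorm : IsNormalized η) (hηdec : IsDecomposable η)
    (hηsub : ∃ c, HasCoords η c ∧ ∀ A : {A : Finset (Fin n) // A.card = k - 1},
      (⟨0, by omega⟩ : Fin n) ∈ A.1 → c A = 0)
    (ω : ⋀[ℝ]^k (Fin n → ℝ))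
    (hωnn : IsNonneg ω) (hωnorm : IsNormalized ω) (hωdec : IsDecomposable ω)
    (hωsub : ∃ c, HasCoords ω c ∧ ∀ A : {A : Finset (Fin n) // A.card = k},
      (⟨0, by omega⟩ : Fin n) ∈ A.1 → c A = 0)
    (hcontain : ∃ v : Fin n → ℝ,
      (ω : ExteriorAlgebra ℝ (Fin n → ℝ)) =
        ι ℝ v * (η : ExteriorAlgebra ℝ (Fin n → ℝ)))
    (μ : ⋀[ℝ]^k (Fin n → ℝ))
    (hμ : (μ : ExteriorAlgebra ℝ (Fin n → ℝ)) =
      ι ℝ (Pi.single (⟨0, by omega⟩ : Fin n) (1 : ℝ)) *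
        (η : ExteriorAlgebra ℝ (Fin n → ℝ))) :
    IsNonneg (t • μ + (1 - t) • ω) ∧ IsNormalized (t • μ + (1 - t) • ω) ∧
      IsDecomposable (t • μ + (1 - t) • ω) := by
  classical
  obtain ⟨m, rfl⟩ : ∃ m, k = m + 1 := ⟨k - 1, (Nat.succ_pred_eq_of_pos hk).symm⟩
  have hn : 0 < n := lt_of_lt_of_le (Nat.succ_pos m) hkn
  set z : Fin n := ⟨0, hn⟩ with hzdef
  have hzle : ∀ b : Fin n, z ≤ b := fun b => by
    rw [Fin.le_def]; exact Nat.zero_le _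
  -- unify the coordinates of η
  obtain ⟨cη, hcη, hcηnn⟩ := hηnn
  obtain ⟨cη', hcη', hcηsum⟩ := hηnorm
  obtain ⟨cη'', hcη'', hcηz⟩ := hηsub
  rw [hasCoords_unique_s11 hn hcη' hcη] at hcηsum
  rw [hasCoords_unique_s11 hn hcη'' hcη] at hcηz
  -- unify the coordinates of ω
  obtain ⟨cω, hcω, hcωnn⟩ := hωnn
  obtain ⟨cω', hcω', hcωsum⟩ := hωnorm
  rw [hasCoords_unique_s11 hn hcω' hcω] at hcωsum
  -- coordinates of μ
  set d : {B : Finset (Fin n) // B.card = m + 1} → ℝ := fun B =>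
    if hB : z ∈ B.1 then
      cη ⟨B.1.erase z, by rw [Finset.card_erase_of_mem hB, B.2]⟩ else 0 with hd
  have hdnn : ∀ B, 0 ≤ d B := fun B => by
    rw [hd]; dsimp only; split
    · exact hcηnn _
    · exact le_refl 0
  have hμc : HasCoords μ d := by
    show (μ : ExteriorAlgebra ℝ (Fin n → ℝ)) = _
    rw [hμ, (hcη : (η : ExteriorAlgebra ℝ (Fin n → ℝ)) = _), Finset.mul_sum]
    simp_rw [mul_smul_comm]
    refine sum_bij_insert z m _ _ ?_ ?_ ?_
    · intro A hA
      rw [hcηz A hA, zero_smul]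
    · intro B hB
      rw [hd]; dsimp only; rw [dif_neg hB, zero_smul]
    · intro A hA
      rw [wedge_insert (fun b _ => hzle b) hA, hd]; dsimp only
      rw [dif_pos (Finset.mem_insert_self z A.1)]
      congr 1
      exact congrArg cη (Subtype.ext (Finset.erase_insert hA).symm)
  have hdsum : ∑ B, d B = 1 := by
    rw [← hcηsum]
    refine (sum_bij_insert z m cη d (fun A hA => hcηz A hA) ?_ ?_).symm
    · intro B hB
      rw [hd]; dsimp only; rw [dif_neg hB]
    · intro A hA
      rw [hd]; dsimp only
      rw [dif_pos (Finset.mem_insert_self z A.1)]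
      exact congrArg cη (Subtype.ext (Finset.erase_insert hA).symm)
  -- coordinates of ρ
  set cρ : {B : Finset (Fin n) // B.card = m + 1} → ℝ := fun B =>
    t * d B + (1 - t) * cω B with hcρ
  have hρc : HasCoords (t • μ + (1 - t) • ω) cρ := by
    show ((t • μ + (1 - t) • ω : ⋀[ℝ]^(m+1) (Fin n → ℝ)) : ExteriorAlgebra ℝ (Fin n → ℝ)) = _
    rw [Submodule.coe_add, SetLike.val_smul, SetLike.val_smul,
      (hμc : (μ : ExteriorAlgebra ℝ (Fin n → ℝ)) = _),
      (hcω : (ω : ExteriorAlgebra ℝ (Fin n → ℝ)) = _),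
      Finset.smul_sum, Finset.smul_sum, ← Finset.sum_add_distrib]
    refine Finset.sum_congr rfl fun B _ => ?_
    rw [hcρ]; dsimp only
    rw [add_smul, smul_smul, smul_smul]
  refine ⟨⟨cρ, hρc, fun B => add_nonneg (mul_nonneg ht0 (hdnn B))
      (mul_nonneg (by linarith) (hcωnn B))⟩,
    ⟨cρ, hρc, ?_⟩, ?_⟩
  · rw [hcρ]
    rw [Finset.sum_add_distrib, ← Finset.mul_sum, ← Finset.mul_sum, hdsum, hcωsum]
    ring
  · obtain ⟨v, hv⟩ := hcontain
    obtain ⟨u, hu⟩ := hηdec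
    have hu' : (η : ExteriorAlgebra ℝ (Fin n → ℝ)) = ιMulti ℝ m (fun i : Fin m => u i) := hu
    refine ⟨Fin.cons (t • (Pi.single z 1 : Fin n → ℝ) + (1 - t) • v) (fun i : Fin m => u i), ?_⟩
    rw [Submodule.coe_add, SetLike.val_smul, SetLike.val_smul, hμ, hv, hu']
    rw [ιMulti_succ_apply, Fin.cons_zero]
    rw [show Matrix.vecTail (Fin.cons (t • (Pi.single z 1 : Fin n → ℝ) + (1 - t) • v)
        (fun i : Fin m => u i)) = fun i : Fin m => u i from Matrix.tail_cons _ _]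
    rw [map_add, map_smul, map_smul, add_mul, smul_mul_assoc, smul_mul_assoc]
end
end
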